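/- arXiv:math/0010175 — 4 statements merged into one kernel-verified Lean document; each statement's English description precedes it below -/
import Mathlib

section
/- Let n ≥ 3, let f₁,…,fₙ : ℝ → ℝ be C² functions, and let F(x) = (f₁(x₁) + … + fₙ(xₙ))/(x₁ + … + xₙ) on the set where s := x₁ + … + xₙ ≠ 0. Then for any three pairwise distinct indices a, b, p ∈ {1,…,n} and any point x with s ≠ 0, the following exact identity holds: F_{pa}(x)·F_b(x) − F_{pb}(x)·F_a(x) = (f_a′(x_a) − f_b′(x_b)) · (f_p′(x_p)·s − (f₁(x₁) + … + fₙ(xₙ))) / s⁴, where F_i denotes ∂F/∂x_i and F_{pi} denotes ∂²F/∂x_p∂x_i. In particular, the reducibility equation F_{pa}/F_{pb} = F_a/F_b holds at x (in the form F_{pa}F_b = F_{pb}F_a) if and only if (f_a′(x_a) − f_b′(x_b)) · (f_p′(x_p)(x₁ + … + xₙ) − (f₁(x₁) + … + fₙ(xₙ))) = 0. -/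
open Filter

private lemma stmt3_aux_first (n : ℕ) (f : Fin n → ℝ → ℝ) (hf : ∀ i, ContDiff ℝ 2 (f i))
    (j : Fin n) (y : Fin n → ℝ) (hy : (∑ i, y i) ≠ 0) :
    fderiv ℝ (fun z : Fin n → ℝ => (∑ i, f i (z i)) / (∑ i, z i)) y (Pi.single j 1)
      = (deriv (f j) (y j) * (∑ i, y i) - (∑ i, f i (y i))) / (∑ i, y i) ^ 2 := by
  set π : Fin n → (Fin n → ℝ) →L[ℝ] ℝ :=
    fun i => ContinuousLinearMap.proj (R := ℝ) (φ := fun _ : Fin n => ℝ) i with hπ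
  have hS : HasFDerivAt (fun z : Fin n → ℝ => ∑ i, z i) (∑ i, π i) y :=
    HasFDerivAt.fun_sum fun i _ => (π i).hasFDerivAt
  have hN : HasFDerivAt (fun z : Fin n → ℝ => ∑ i, f i (z i))
      (∑ i, deriv (f i) (y i) • π i) y :=
    HasFDerivAt.fun_sum fun i _ =>
      (((hf i).differentiable (by norm_num) (y i)).hasDerivAt).comp_hasFDerivAt y
        (π i).hasFDerivAt
  have hinv : HasFDerivAt (fun z : Fin n → ℝ => (∑ i, z i)⁻¹)
      ((-((∑ i, y i) ^ 2)⁻¹) • ∑ i, π i) y :=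
    (hasDerivAt_inv hy).comp_hasFDerivAt y hS
  have hq : HasFDerivAt (fun z : Fin n → ℝ => (∑ i, f i (z i)) / (∑ i, z i))
      ((∑ i, f i (y i)) • ((-((∑ i, y i) ^ 2)⁻¹) • ∑ i, π i)
        + ((∑ i, y i)⁻¹) • ∑ i, deriv (f i) (y i) • π i) y := by
    simpa only [div_eq_mul_inv] using hN.fun_mul hinv
  rw [hq.fderiv]
  simp only [ContinuousLinearMap.add_apply, ContinuousLinearMap.smul_apply,
    ContinuousLinearMap.sum_apply, hπ, ContinuousLinearMap.proj_apply,
    Pi.single_apply, smul_eq_mul]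
  simp only [mul_ite, mul_one, mul_zero, Finset.sum_ite_eq', Finset.mem_univ, if_true]
  field_simp
  ring

private lemma stmt3_aux_second (n : ℕ) (f : Fin n → ℝ → ℝ) (hf : ∀ i, ContDiff ℝ 2 (f i))
    (j p : Fin n) (hjp : j ≠ p) (x : Fin n → ℝ) (hs : (∑ i, x i) ≠ 0) :
    fderiv ℝ (fun y => fderiv ℝ (fun z : Fin n → ℝ => (∑ i, f i (z i)) / (∑ i, z i)) y
        (Pi.single j 1)) x (Pi.single p 1)
      = ((deriv (f j) (x j) - deriv (f p) (x p)) * (∑ i, x i)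
          - 2 * (deriv (f j) (x j) * (∑ i, x i) - (∑ i, f i (x i)))) / (∑ i, x i) ^ 3 := by
  have hopen : ∀ᶠ y in nhds x, (∑ i, y i) ≠ 0 :=
    (continuous_finset_sum _ fun i _ => continuous_apply i).continuousAt.eventually_ne hs
  have heq : (fun y => fderiv ℝ (fun z : Fin n → ℝ => (∑ i, f i (z i)) / (∑ i, z i)) y
      (Pi.single j 1))
      =ᶠ[nhds x] fun y => (deriv (f j) (y j) * (∑ i, y i) - (∑ i, f i (y i))) / (∑ i, y i) ^ 2 :=
    hopen.mono fun y hy => stmt3_aux_first n f hf j y hy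
  rw [heq.fderiv_eq]
  set π : Fin n → (Fin n → ℝ) →L[ℝ] ℝ :=
    fun i => ContinuousLinearMap.proj (R := ℝ) (φ := fun _ : Fin n => ℝ) i with hπ
  have hS : HasFDerivAt (fun z : Fin n → ℝ => ∑ i, z i) (∑ i, π i) x :=
    HasFDerivAt.fun_sum fun i _ => (π i).hasFDerivAt
  have hN : HasFDerivAt (fun z : Fin n → ℝ => ∑ i, f i (z i))
      (∑ i, deriv (f i) (x i) • π i) x :=
    HasFDerivAt.fun_sum fun i _ =>
      (((hf i).differentiable (by norm_num) (x i)).hasDerivAt).comp_hasFDerivAt x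
        (π i).hasFDerivAt
  have hDd : Differentiable ℝ (deriv (f j)) := by
    have h2 : ContDiff ℝ (1 + 1 : WithTop ℕ∞) (f j) := by
      have := hf j; norm_num at this ⊢; exact this
    exact ((contDiff_succ_iff_deriv.mp h2).2.2).differentiable one_ne_zero
  have hc : HasFDerivAt (fun y : Fin n → ℝ => deriv (f j) (y j))
      ((deriv (deriv (f j)) (x j)) • π j) x :=
    by have := ((hDd (x j)).hasDerivAt).comp_hasFDerivAt x (π j).hasFDerivAt; exact this
  have hnum : HasFDerivAt (fun y : Fin n → ℝ => deriv (f j) (y j) * (∑ i, y i)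
      - (∑ i, f i (y i)))
      ((deriv (f j) (x j) • (∑ i, π i) + (∑ i, x i) • ((deriv (deriv (f j)) (x j)) • π j))
        - ∑ i, deriv (f i) (x i) • π i) x := (hc.mul hS).sub hN
  have hSq : HasFDerivAt (fun y : Fin n → ℝ => (∑ i, y i) ^ 2)
      ((2 * (∑ i, x i) ^ 1) • ∑ i, π i) x :=
    (hasDerivAt_pow 2 (∑ i, x i)).comp_hasFDerivAt x hS
  have hinv2 : HasFDerivAt (fun y : Fin n → ℝ => ((∑ i, y i) ^ 2)⁻¹)
      ((-(((∑ i, x i) ^ 2) ^ 2)⁻¹) • ((2 * (∑ i, x i) ^ 1) • ∑ i, π i)) x :=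
    (hasDerivAt_inv (pow_ne_zero 2 hs)).comp_hasFDerivAt x hSq
  have hg : HasFDerivAt (fun y : Fin n → ℝ =>
      (deriv (f j) (y j) * (∑ i, y i) - (∑ i, f i (y i))) / (∑ i, y i) ^ 2)
      ((deriv (f j) (x j) * (∑ i, x i) - (∑ i, f i (x i))) •
          ((-(((∑ i, x i) ^ 2) ^ 2)⁻¹) • ((2 * (∑ i, x i) ^ 1) • ∑ i, π i))
        + (((∑ i, x i) ^ 2)⁻¹) •
          ((deriv (f j) (x j) • (∑ i, π i) + (∑ i, x i) • ((deriv (deriv (f j)) (x j)) • π j))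
            - ∑ i, deriv (f i) (x i) • π i)) x := by
    simpa only [div_eq_mul_inv] using hnum.fun_mul hinv2
  rw [hg.fderiv]
  simp only [ContinuousLinearMap.add_apply, ContinuousLinearMap.sub_apply,
    ContinuousLinearMap.smul_apply, ContinuousLinearMap.sum_apply, hπ,
    ContinuousLinearMap.proj_apply, Pi.single_apply, smul_eq_mul, hjp, if_false]
  simp only [mul_ite, mul_one, mul_zero, Finset.sum_ite_eq', Finset.mem_univ, if_true]
  field_simp
  ring

/-- For `F(x) = (f₁(x₁) + … + fₙ(xₙ))/(x₁ + … + xₙ)` and pairwise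
distinct indices `a, b, p`, at every point with `s = x₁ + … + xₙ ≠ 0` one has the
exact identity
`F_{pa}·F_b − F_{pb}·F_a = (f_a′(x_a) − f_b′(x_b))·(f_p′(x_p)·s − Σfᵢ(xᵢ))/s⁴`;
in particular the reducibility equation `F_{pa}·F_b = F_{pb}·F_a` holds at `x`
iff `(f_a′(x_a) − f_b′(x_b))·(f_p′(x_p)·s − Σfᵢ(xᵢ)) = 0`. -/
theorem stmt_3 (n : ℕ) (hn : 3 ≤ n)
    (f : Fin n → ℝ → ℝ) (hf : ∀ i, ContDiff ℝ 2 (f i))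
    (F : (Fin n → ℝ) → ℝ)
    (hF : ∀ x, F x = (∑ i, f i (x i)) / (∑ i, x i))
    (a b p : Fin n) (hab : a ≠ b) (hap : a ≠ p) (hbp : b ≠ p)
    (x : Fin n → ℝ) (hs : (∑ i, x i) ≠ 0) :
    (fderiv ℝ (fun y => fderiv ℝ F y (Pi.single a 1)) x (Pi.single p 1) *
          fderiv ℝ F x (Pi.single b 1) -
        fderiv ℝ (fun y => fderiv ℝ F y (Pi.single b 1)) x (Pi.single p 1) *
          fderiv ℝ F x (Pi.single a 1) =
      (deriv (f a) (x a) - deriv (f b) (x b)) *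
        (deriv (f p) (x p) * (∑ i, x i) - (∑ i, f i (x i))) / (∑ i, x i) ^ 4) ∧
    ((fderiv ℝ (fun y => fderiv ℝ F y (Pi.single a 1)) x (Pi.single p 1) *
          fderiv ℝ F x (Pi.single b 1) =
        fderiv ℝ (fun y => fderiv ℝ F y (Pi.single b 1)) x (Pi.single p 1) *
          fderiv ℝ F x (Pi.single a 1)) ↔
      (deriv (f a) (x a) - deriv (f b) (x b)) *
        (deriv (f p) (x p) * (∑ i, x i) - (∑ i, f i (x i))) = 0) := by
  have hFfun : F = fun z : Fin n → ℝ => (∑ i, f i (z i)) / (∑ i, z i) := funext hF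
  subst hFfun
  have h1a := stmt3_aux_first n f hf a x hs
  have h1b := stmt3_aux_first n f hf b x hs
  have h2a := stmt3_aux_second n f hf a p hap x hs
  have h2b := stmt3_aux_second n f hf b p hbp x hs
  rw [h1a, h1b, h2a, h2b]
  have key : ((deriv (f a) (x a) - deriv (f p) (x p)) * (∑ i, x i)
          - 2 * (deriv (f a) (x a) * (∑ i, x i) - (∑ i, f i (x i)))) / (∑ i, x i) ^ 3 *
        ((deriv (f b) (x b) * (∑ i, x i) - (∑ i, f i (x i))) / (∑ i, x i) ^ 2)
      - ((deriv (f b) (x b) - deriv (f p) (x p)) * (∑ i, x i)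
          - 2 * (deriv (f b) (x b) * (∑ i, x i) - (∑ i, f i (x i)))) / (∑ i, x i) ^ 3 *
        ((deriv (f a) (x a) * (∑ i, x i) - (∑ i, f i (x i))) / (∑ i, x i) ^ 2)
      = (deriv (f a) (x a) - deriv (f b) (x b)) *
        (deriv (f p) (x p) * (∑ i, x i) - (∑ i, f i (x i))) / (∑ i, x i) ^ 4 := by
    field_simp
    ring
  refine ⟨key, ?_⟩
  rw [← sub_eq_zero, key, div_eq_zero_iff]
  simp [pow_ne_zero 4 hs]
end

section
/- Let n ≥ 2, let f₁,…,fₙ : ℝ → ℝ be C¹ functions, let U ⊆ ℝⁿ be a nonempty connected open set on which x₁ + … + xₙ ≠ 0, and let F(x) = (f₁(x₁) + … + fₙ(xₙ))/(x₁ + … + xₙ). If for some fixed index p the identity f_p′(x_p)·(x₁ + … + xₙ) = f₁(x₁) + … + fₙ(xₙ) holds for all x ∈ U, then F is constant on U (and in particular ∂F/∂xᵢ vanishes identically on U for every i, so F does not define a local n-quasigroup on U). -/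
/-- If on a nonempty connected open set `U` (with `x₁ + … + xₙ ≠ 0`)
the identity `f_p′(x_p)·(x₁ + … + xₙ) = f₁(x₁) + … + fₙ(xₙ)` holds for some fixed
index `p`, then `F(x) = (f₁(x₁) + … + fₙ(xₙ))/(x₁ + … + xₙ)` is constant on `U`,
and in particular all partial derivatives of `F` vanish identically on `U`
(so `F` does not define a local `n`-quasigroup on `U`). -/
theorem stmt_4 (n : ℕ) (hn : 2 ≤ n)
    (f : Fin n → ℝ → ℝ) (hf : ∀ i, ContDiff ℝ 1 (f i))
    (U : Set (Fin n → ℝ)) (hUopen : IsOpen U) (hUconn : IsConnected U)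
    (hden : ∀ x ∈ U, (∑ i, x i) ≠ 0)
    (F : (Fin n → ℝ) → ℝ)
    (hF : ∀ x, F x = (∑ i, f i (x i)) / (∑ i, x i))
    (p : Fin n)
    (hp : ∀ x ∈ U, deriv (f p) (x p) * (∑ i, x i) = ∑ i, f i (x i)) :
    (∃ C : ℝ, ∀ x ∈ U, F x = C) ∧
      ∀ x ∈ U, ∀ i, fderiv ℝ F x (Pi.single i 1) = 0 := by
  have hfd : ∀ i (t : ℝ), DifferentiableAt ℝ (f i) t := fun i t =>
    ((hf i).differentiable one_ne_zero).differentiableAt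
  -- Step 1: all the derivatives deriv (f i) (x i) agree with deriv (f p) (x p) on U
  have key : ∀ x ∈ U, ∀ i, deriv (f i) (x i) = deriv (f p) (x p) := by
    intro x hx i
    by_cases hip : i = p
    · subst hip; rfl
    · have hcont : Continuous (fun t : ℝ => Function.update x i (x i + t)) :=
        continuous_const.update i (by continuity)
      have h0 : Function.update x i (x i + 0) = x := by
        simp [Function.update_eq_self]
      have hmem : ∀ᶠ t in nhds (0:ℝ), Function.update x i (x i + t) ∈ U := by
        have hx0 : Function.update x i (x i + 0) ∈ U := by rw [h0]; exact hx
        exact hcont.continuousAt.eventually_mem (hUopen.mem_nhds hx0)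
      have hupd : ∀ t : ℝ, ∀ j ∈ Finset.univ \ {i},
          Function.update x i (x i + t) j = x j := by
        intro t j hj
        exact Function.update_of_ne (by simpa using (Finset.mem_sdiff.1 hj).2) _ _
      have hsum : ∀ t : ℝ, (∑ j, Function.update x i (x i + t) j) = (∑ j, x j) + t := by
        intro t
        rw [Finset.sum_eq_add_sum_sdiff_singleton_of_mem (Finset.mem_univ i)
            (fun j => Function.update x i (x i + t) j),
          Finset.sum_eq_add_sum_sdiff_singleton_of_mem (Finset.mem_univ i) x,
          Function.update_self, Finset.sum_congr rfl (hupd t)]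
        ring
      have hfsum : ∀ t : ℝ, (∑ j, f j (Function.update x i (x i + t) j))
          = f i (x i + t) + ∑ j ∈ Finset.univ \ {i}, f j (x j) := by
        intro t
        rw [Finset.sum_eq_add_sum_sdiff_singleton_of_mem (Finset.mem_univ i)
            (fun j => f j (Function.update x i (x i + t) j)),
          Function.update_self]
        congr 1
        exact Finset.sum_congr rfl fun j hj => by rw [hupd t j hj]
      have heq : (fun t : ℝ => deriv (f p) (x p) * ((∑ j, x j) + t)) =ᶠ[nhds (0:ℝ)]
          (fun t : ℝ => f i (x i + t) + ∑ j ∈ Finset.univ \ {i}, f j (x j)) := by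
        filter_upwards [hmem] with t ht
        have h1 := hp _ ht
        rw [hsum, hfsum] at h1
        rw [Function.update_of_ne (Ne.symm hip)] at h1
        exact h1
      have d1 : HasDerivAt (fun t : ℝ => deriv (f p) (x p) * ((∑ j, x j) + t))
          (deriv (f p) (x p)) 0 := by
        have h := ((hasDerivAt_id (0:ℝ)).const_add ((∑ j, x j))).const_mul
          (deriv (f p) (x p))
        simpa using h
      have d2 : HasDerivAt (fun t : ℝ => f i (x i + t) + ∑ j ∈ Finset.univ \ {i}, f j (x j))
          (deriv (f i) (x i)) 0 := by
        have inner : HasDerivAt (fun t : ℝ => x i + t) 1 0 := by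
          simpa using (hasDerivAt_id (0:ℝ)).const_add (x i)
        have houter : HasDerivAt (f i) (deriv (f i) (x i)) (x i + 0) := by
          simpa using (hfd i (x i)).hasDerivAt
        have hcomp := houter.comp (0:ℝ) inner
        simpa [Function.comp] using hcomp.add_const (∑ j ∈ Finset.univ \ {i}, f j (x j))
      have := heq.deriv_eq
      rw [d1.deriv, d2.deriv] at this
      exact this.symm
  -- Step 2: F has derivative 0 at every point of U
  have hder : ∀ x ∈ U, HasFDerivAt F (0 : (Fin n → ℝ) →L[ℝ] ℝ) x := by
    intro x hx
    have hS0 := hden x hx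
    have hFeq : F = fun y => (∑ i, f i (y i)) * (∑ i, y i)⁻¹ := by
      funext y; rw [hF y, div_eq_mul_inv]
    set S : (Fin n → ℝ) →L[ℝ] ℝ := ∑ i, ContinuousLinearMap.proj i with hS
    have hSapp : ∀ y : Fin n → ℝ, S y = ∑ i, y i := by
      intro y; simp [hS, ContinuousLinearMap.sum_apply]
    have hproj : ∀ i : Fin n, HasFDerivAt (fun y : Fin n → ℝ => y i)
        (ContinuousLinearMap.proj (R := ℝ) (φ := fun _ : Fin n => ℝ) i) x :=
      fun i => by exact hasFDerivAt_apply i x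
    have hg : HasFDerivAt (fun y : Fin n → ℝ => ∑ i, f i (y i))
        (∑ i, deriv (f i) (x i) • (ContinuousLinearMap.proj i :
          (Fin n → ℝ) →L[ℝ] ℝ)) x := by
      apply HasFDerivAt.fun_sum
      intro i _
      exact ((hfd i (x i)).hasDerivAt).comp_hasFDerivAt x (hproj i)
    have hh : HasFDerivAt (fun y : Fin n → ℝ => ∑ i, y i) S x := by
      have h := S.hasFDerivAt (x := x)
      convert h using 1
      funext y; exact (hSapp y).symm
    have hinv : HasFDerivAt (fun y : Fin n → ℝ => (∑ i, y i)⁻¹)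
        ((-((∑ i, x i) ^ 2)⁻¹) • S) x :=
      (hasDerivAt_inv hS0).comp_hasFDerivAt x hh
    have hmul := hg.fun_mul hinv
    rw [← hFeq] at hmul
    refine hmul.congr_fderiv (Eq.symm ?_)
    symm
    ext v
    simp only [ContinuousLinearMap.add_apply, ContinuousLinearMap.smul_apply,
      ContinuousLinearMap.sum_apply, ContinuousLinearMap.coe_smul',
      Pi.smul_apply, ContinuousLinearMap.proj_apply, ContinuousLinearMap.zero_apply,
      smul_eq_mul]
    rw [hSapp]
    have hkey : ∀ i, deriv (f i) (x i) = deriv (f p) (x p) := key x hx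
    have h1 : (∑ i, deriv (f i) (x i) * v i) = deriv (f p) (x p) * ∑ i, v i := by
      rw [Finset.mul_sum]
      exact Finset.sum_congr rfl fun i _ => by rw [hkey i]
    rw [h1, ← hp x hx]
    field_simp
    ring
  -- Step 3: local constancy
  have hloc : ∀ x ∈ U, ∀ᶠ y in nhds x, F y = F x := by
    intro x hx
    obtain ⟨ε, hε, hball⟩ := Metric.isOpen_iff.1 hUopen x hx
    filter_upwards [Metric.ball_mem_nhds x hε] with y hy
    have hconv : Convex ℝ (Metric.ball x ε) := convex_ball x ε
    apply hconv.is_const_of_fderivWithin_eq_zero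
      (fun z hz => (hder z (hball hz)).differentiableAt.differentiableWithinAt)
      ?_ hy (Metric.mem_ball_self hε)
    intro z hz
    rw [fderivWithin_of_isOpen Metric.isOpen_ball hz]
    exact (hder z (hball hz)).fderiv
  constructor
  · obtain ⟨x₀, hx₀⟩ := hUconn.nonempty
    refine ⟨F x₀, ?_⟩
    have hV : IsOpen {x | x ∈ U ∧ F x = F x₀} := by
      rw [isOpen_iff_mem_nhds]
      rintro x ⟨hxU, hxF⟩
      filter_upwards [hloc x hxU, hUopen.mem_nhds hxU] with y hy hyU
      exact ⟨hyU, hy.trans hxF⟩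
    have hW : IsOpen {x | x ∈ U ∧ F x ≠ F x₀} := by
      rw [isOpen_iff_mem_nhds]
      rintro x ⟨hxU, hxF⟩
      filter_upwards [hloc x hxU, hUopen.mem_nhds hxU] with y hy hyU
      exact ⟨hyU, hy.trans_ne hxF⟩
    intro x hx
    by_contra hne
    obtain ⟨z, hz⟩ := hUconn.isPreconnected _ _ hV hW
      (fun y hy => by by_cases h : F y = F x₀ <;> [left; right] <;> exact ⟨hy, h⟩)
      ⟨x₀, hx₀, hx₀, rfl⟩ ⟨x, hx, hx, hne⟩
    exact hz.2.2.2 hz.2.1.2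
  · intro x hx i
    rw [(hder x hx).fderiv]
    rfl
end

section
/- Let n ≥ 3 and 2 ≤ k ≤ n−1. Let U = I₁ × … × Iₙ ⊆ ℝⁿ be a product of open intervals and let F : U → ℝ be a C² function with ∂F/∂x_a ≠ 0 on U for all a ∈ {1,…,k}, satisfying on U the system F_{pa}·F_b = F_{pb}·F_a for all a, b ∈ {1,…,k} with a ≠ b and all p ∈ {k+1,…,n}. Then every point of U has an open neighborhood on which F admits a decomposition F(x₁,…,xₙ) = g(h(x₁,…,x_k), x_{k+1},…,xₙ) for some C² function h of k variables and some C² function g of n−k+1 variables; i.e., functions of the form (5) constitute the general solution of the system (6). -/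
open Metric Set Filter Topology

lemma clm_pi_expand {n : ℕ} (L : (Fin n → ℝ) →L[ℝ] ℝ) (v : Fin n → ℝ) :
    L v = ∑ i, v i * L (Pi.single i 1) := by
  have hv : ∑ i, Pi.single i (v i) = v := Finset.univ_sum_single v
  have hsm : ∀ i : Fin n, (Pi.single i (v i) : Fin n → ℝ)
      = v i • (Pi.single i (1:ℝ) : Fin n → ℝ) := by
    intro i; funext j; by_cases h : j = i <;> simp [Pi.single_apply, h]
  conv_lhs => rw [← hv]
  rw [map_sum]
  refine Finset.sum_congr rfl fun i _ => ?_
  rw [hsm i, map_smul, smul_eq_mul]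

lemma exists_contDiff_extension {E : Type*} [NormedAddCommGroup E] [NormedSpace ℝ E]
    [FiniteDimensional ℝ E] {f : E → ℝ} {a : E} (hf : ContDiffAt ℝ 2 f a) :
    ∃ g : E → ℝ, ContDiff ℝ 2 g ∧ ∀ᶠ x in 𝓝 a, g x = f x := by
  obtain ⟨u, hu, hfu⟩ := hf.contDiffOn le_rfl (by simp)
  obtain ⟨ε, hε, hball⟩ := Metric.mem_nhds_iff.1 (interior_mem_nhds.2 hu)
  set φ : ContDiffBump a := ⟨ε/2, 2*ε/3, by positivity, by linarith⟩ with hφdef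
  have hsupp : tsupport (φ : E → ℝ) ⊆ ball a ε := by
    rw [φ.tsupport_eq]
    intro x hx
    have : dist x a ≤ 2*ε/3 := mem_closedBall.1 hx
    exact mem_ball.2 (by linarith)
  refine ⟨fun x => φ x * f x, ?_, ?_⟩
  · rw [contDiff_iff_contDiffAt]
    intro x
    by_cases hx : x ∈ ball a ε
    · exact (φ.contDiff.contDiffAt).mul
        ((hfu.mono interior_subset).contDiffAt
          (isOpen_interior.mem_nhds (hball hx)))
    · have hev : ∀ᶠ y in 𝓝 x, φ y * f y = 0 := by
        filter_upwards [(isClosed_tsupport (φ : E → ℝ)).isOpen_compl.mem_nhds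
          (fun hc => hx (hsupp hc))] with y hy
        rw [image_eq_zero_of_notMem_tsupport hy, zero_mul]
      exact (contDiffAt_const (c := (0:ℝ))).congr_of_eventuallyEq hev
  · filter_upwards [Metric.ball_mem_nhds a (by positivity : (0:ℝ) < ε/2)] with x hx
    rw [φ.one_of_mem_closedBall (mem_ball.1 hx).le, one_mul]

lemma prop_ratio {n k : ℕ} {U : Set (Fin n → ℝ)} {F : (Fin n → ℝ) → ℝ}
    (hUo : IsOpen U) (hUc : Convex ℝ U)
    (hFsm : ContDiffOn ℝ 2 F U)
    (hnz : ∀ x ∈ U, ∀ a : Fin n, a.1 < k → fderiv ℝ F x (Pi.single a 1) ≠ 0)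
    (hpde : ∀ x ∈ U, ∀ a b : Fin n, a.1 < k → b.1 < k → a ≠ b →
      ∀ p : Fin n, k ≤ p.1 →
        fderiv ℝ (fun y => fderiv ℝ F y (Pi.single a 1)) x (Pi.single p 1) *
            fderiv ℝ F x (Pi.single b 1) =
          fderiv ℝ (fun y => fderiv ℝ F y (Pi.single b 1)) x (Pi.single p 1) *
            fderiv ℝ F x (Pi.single a 1))
    {a b : Fin n} (ha : a.1 < k) (hb : b.1 < k)
    {y z : Fin n → ℝ} (hy : y ∈ U) (hz : z ∈ U)
    (hyz : ∀ i : Fin n, i.1 < k → y i = z i) :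
    fderiv ℝ F y (Pi.single a 1) * fderiv ℝ F z (Pi.single b 1)
      = fderiv ℝ F y (Pi.single b 1) * fderiv ℝ F z (Pi.single a 1) := by
  rcases eq_or_ne a b with rfl | hab
  · ring
  set Fa : (Fin n → ℝ) → ℝ := fun w => fderiv ℝ F w (Pi.single a 1) with hFa
  set Fb : (Fin n → ℝ) → ℝ := fun w => fderiv ℝ F w (Pi.single b 1) with hFb
  have hFa1 : ContDiffOn ℝ 1 Fa U :=
    (hFsm.fderiv_of_isOpen hUo (by norm_num)).clm_apply contDiffOn_const
  have hFb1 : ContDiffOn ℝ 1 Fb U :=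
    (hFsm.fderiv_of_isOpen hUo (by norm_num)).clm_apply contDiffOn_const
  set γ : ℝ → (Fin n → ℝ) := fun s => y + s • (z - y) with hγ
  have hγmem : ∀ s ∈ Icc (0:ℝ) 1, γ s ∈ U := fun s hs =>
    hUc.add_smul_sub_mem hy hz hs
  set q : ℝ → ℝ := fun s => Fa (γ s) / Fb (γ s) with hq
  have keyderiv : ∀ s ∈ Icc (0:ℝ) 1, HasDerivAt q 0 s := by
    intro s hs
    have hγs : γ s ∈ U := hγmem s hs
    have hγ' : HasDerivAt γ (z - y) s := by
      exact (((hasDerivAt_id s).smul_const (z - y)).const_add y).congr_deriv (by simp)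
    have hFaD : HasFDerivAt Fa (fderiv ℝ Fa (γ s)) (γ s) :=
      (((hFa1.differentiableOn one_ne_zero).differentiableAt
        (hUo.mem_nhds hγs))).hasFDerivAt
    have hFbD : HasFDerivAt Fb (fderiv ℝ Fb (γ s)) (γ s) :=
      (((hFb1.differentiableOn one_ne_zero).differentiableAt
        (hUo.mem_nhds hγs))).hasFDerivAt
    have hA : HasDerivAt (fun t => Fa (γ t)) (fderiv ℝ Fa (γ s) (z - y)) s :=
      hFaD.comp_hasDerivAt s hγ'
    have hB : HasDerivAt (fun t => Fb (γ t)) (fderiv ℝ Fb (γ s) (z - y)) s :=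
      hFbD.comp_hasDerivAt s hγ'
    have hBne : Fb (γ s) ≠ 0 := hnz _ hγs b hb
    have hnum : fderiv ℝ Fa (γ s) (z - y) * Fb (γ s)
        - Fa (γ s) * fderiv ℝ Fb (γ s) (z - y) = 0 := by
      rw [clm_pi_expand (fderiv ℝ Fa (γ s)) (z - y),
          clm_pi_expand (fderiv ℝ Fb (γ s)) (z - y),
          Finset.sum_mul, mul_comm (Fa (γ s)), Finset.sum_mul, ← Finset.sum_sub_distrib]
      refine Finset.sum_eq_zero fun p _ => ?_
      by_cases hp : p.1 < k
      · have : (z - y) p = 0 := by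
          have := hyz p hp
          simp [this]
        rw [this]; ring
      · have hpk : k ≤ p.1 := le_of_not_gt hp
        have := hpde _ hγs a b ha hb hab p hpk
        rw [hFa, hFb]
        dsimp only
        linear_combination (z - y) p * this
    have := hA.div hB hBne
    have h0 : (fderiv ℝ Fa (γ s) (z - y) * Fb (γ s)
        - Fa (γ s) * fderiv ℝ Fb (γ s) (z - y)) / (Fb (γ s)) ^ 2 = 0 := by
      rw [hnum, zero_div]
    rw [h0] at this
    exact this
  have hcont : ContinuousOn q (Icc 0 1) :=
    fun s hs => ((keyderiv s hs).continuousAt).continuousWithinAt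
  have hconst := constant_of_has_deriv_right_zero hcont
    (fun s hs => ((keyderiv s (Ico_subset_Icc_self hs)).hasDerivWithinAt))
  have h10 : q 1 = q 0 := hconst 1 (by norm_num)
  have hγ0 : γ 0 = y := by simp [hγ]
  have hγ1 : γ 1 = z := by simp [hγ]
  rw [hq] at h10
  dsimp only at h10
  rw [hγ0, hγ1] at h10
  have hby : Fb y ≠ 0 := hnz _ hy b hb
  have hbz : Fb z ≠ 0 := hnz _ hz b hb
  have := (div_eq_div_iff hbz hby).1 h10
  simp only [hFa, hFb] at this
  linarith [this]

set_option maxHeartbeats 2000000 in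
/-- If a C² function `F` on a product `U = I₁ × … × Iₙ` of open
intervals has `∂F/∂x_a ≠ 0` on `U` for `a ∈ {1,…,k}` and satisfies the system
`F_{pa}·F_b = F_{pb}·F_a` (distinct `a, b ∈ {1,…,k}`, `p ∈ {k+1,…,n}`) on `U`,
then every point of `U` has an open neighborhood on which `F` admits a
`(1,k)`-reducibility `F(x₁,…,xₙ) = g(h(x₁,…,x_k), x_{k+1},…,xₙ)` with C²
functions `h` and `g`. -/
theorem stmt_6 (n k : ℕ) (hn : 3 ≤ n) (hk2 : 2 ≤ k) (hkn : k ≤ n - 1)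
    (I : Fin n → Set ℝ) (hIopen : ∀ i, IsOpen (I i))
    (hIne : ∀ i, (I i).Nonempty) (hIconn : ∀ i, (I i).OrdConnected)
    (U : Set (Fin n → ℝ)) (hU : U = {x | ∀ i, x i ∈ I i})
    (F : (Fin n → ℝ) → ℝ) (hFsm : ContDiffOn ℝ 2 F U)
    (hnz : ∀ x ∈ U, ∀ a : Fin n, a.1 < k → fderiv ℝ F x (Pi.single a 1) ≠ 0)
    (hpde : ∀ x ∈ U, ∀ a b : Fin n, a.1 < k → b.1 < k → a ≠ b →
      ∀ p : Fin n, k ≤ p.1 →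
        fderiv ℝ (fun y => fderiv ℝ F y (Pi.single a 1)) x (Pi.single p 1) *
            fderiv ℝ F x (Pi.single b 1) =
          fderiv ℝ (fun y => fderiv ℝ F y (Pi.single b 1)) x (Pi.single p 1) *
            fderiv ℝ F x (Pi.single a 1)) :
    ∀ x ∈ U, ∃ V : Set (Fin n → ℝ), IsOpen V ∧ x ∈ V ∧ V ⊆ U ∧
      ∃ (h : (Fin k → ℝ) → ℝ) (g : ℝ × (Fin (n - k) → ℝ) → ℝ),
        ContDiff ℝ 2 h ∧ ContDiff ℝ 2 g ∧
        ∀ y ∈ V, F y = g (h (fun i => y (Fin.castLE (by omega) i)),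
          fun j => y ⟨k + j.1, by have := j.2; omega⟩) := by
  intro x0 hx0
  have hkltn : k < n := by omega
  have h0k : (0:ℕ) < k := by omega
  -- basic facts about U
  have hU' : U = Set.pi Set.univ I := by rw [hU]; ext x; simp [Set.mem_pi]
  have hUopen : IsOpen U := by
    rw [hU']; exact isOpen_set_pi Set.finite_univ (fun i _ => hIopen i)
  have hUconv : Convex ℝ U := by
    rw [hU']; exact convex_pi (fun i _ => (hIconn i).convex)
  -- the distinguished index
  set i0 : Fin n := ⟨0, by omega⟩ with hi0def
  have hi0k : i0.1 < k := h0k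
  -- projections
  set Pk : (Fin n → ℝ) →L[ℝ] (Fin n → ℝ) :=
    ContinuousLinearMap.pi (fun i => if i.1 < k then ContinuousLinearMap.proj i else 0)
    with hPkdef
  set Pk' : (Fin n → ℝ) →L[ℝ] (Fin n → ℝ) :=
    ContinuousLinearMap.pi (fun i => if i.1 < k then 0 else ContinuousLinearMap.proj i)
    with hPk'def
  have hPkapp : ∀ (z : Fin n → ℝ) i, Pk z i = if i.1 < k then z i else 0 := by
    intro z i
    rw [hPkdef, ContinuousLinearMap.pi_apply]
    by_cases h : i.1 < k <;> simp [h]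
  have hPk'app : ∀ (z : Fin n → ℝ) i, Pk' z i = if i.1 < k then 0 else z i := by
    intro z i
    rw [hPk'def, ContinuousLinearMap.pi_apply]
    by_cases h : i.1 < k <;> simp [h]
  have hmixco : ∀ (u w : Fin n → ℝ) i, (Pk u + Pk' w) i = if i.1 < k then u i else w i := by
    intro u w i
    rw [Pi.add_apply, hPkapp, hPk'app]
    by_cases h : i.1 < k <;> simp [h]
  have hmixself : ∀ u : Fin n → ℝ, Pk u + Pk' u = u := by
    intro u; funext i; rw [hmixco]; by_cases h : i.1 < k <;> simp [h]
  -- G and Φ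
  set G : (Fin n → ℝ) → ℝ := fun z => F (Pk z + Pk' x0) with hGdef
  set Φ : (Fin n → ℝ) → (Fin n → ℝ) :=
    fun z => z + (G z - z i0) • (Pi.single i0 (1:ℝ) : Fin n → ℝ) with hΦdef
  have hΦapp : ∀ z j, Φ z j = if j = i0 then G z else z j := by
    intro z j
    rw [hΦdef]
    dsimp only
    rw [Pi.add_apply, Pi.smul_apply, Pi.single_apply, smul_eq_mul]
    by_cases h : j = i0
    · rw [if_pos h, if_pos h, h]; ring
    · rw [if_neg h, if_neg h]; ring
  have hGmix0 : Pk x0 + Pk' x0 = x0 := hmixself x0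
  -- smoothness of F
  have hFc2at : ∀ z ∈ U, ContDiffAt ℝ 2 F z := fun z hz =>
    hFsm.contDiffAt (hUopen.mem_nhds hz)
  have hFd : ∀ z ∈ U, HasFDerivAt F (fderiv ℝ F z) z := fun z hz =>
    ((hFc2at z hz).differentiableAt (by norm_num)).hasFDerivAt
  have hGc2 : ContDiffAt ℝ 2 G x0 := by
    have h1 : ContDiffAt ℝ 2 F (Pk x0 + Pk' x0) := by rw [hGmix0]; exact hFc2at x0 hx0
    exact h1.comp x0 ((Pk.contDiff.add contDiff_const).contDiffAt)
  -- derivative of Φ at x0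
  set ℓ : (Fin n → ℝ) →L[ℝ] ℝ := (fderiv ℝ F x0).comp Pk with hℓdef
  have hG' : HasFDerivAt G ℓ x0 := by
    have hin : HasFDerivAt (fun z : Fin n → ℝ => Pk z + Pk' x0) Pk x0 :=
      Pk.hasFDerivAt.add_const _
    have hF0 : HasFDerivAt F (fderiv ℝ F x0) (Pk x0 + Pk' x0) := by
      rw [hGmix0]; exact hFd x0 hx0
    exact hF0.comp x0 hin
  set A : (Fin n → ℝ) →L[ℝ] (Fin n → ℝ) :=
    ContinuousLinearMap.id ℝ _
      + (ℓ - ContinuousLinearMap.proj i0).smulRight (Pi.single i0 (1:ℝ) : Fin n → ℝ) with hAdef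
  have hΦ' : HasFDerivAt Φ A x0 := by
    rw [hΦdef, hAdef]
    exact (hasFDerivAt_id x0).add
      (((hG'.sub ((ContinuousLinearMap.proj i0).hasFDerivAt)).smul_const
        (Pi.single i0 (1:ℝ) : Fin n → ℝ)))
  have hAapp : ∀ v j, A v j = v j + (ℓ v - v i0) * (if j = i0 then 1 else 0) := by
    intro v j
    rw [hAdef]
    simp [ContinuousLinearMap.smulRight_apply, Pi.single_apply,
      ContinuousLinearMap.proj_apply, smul_eq_mul]
  have hAinj : Function.Injective A := by
    have hker : ∀ v, A v = 0 → v = 0 := by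
      intro v hv
      have hj : ∀ j, j ≠ i0 → v j = 0 := by
        intro j hjne
        have := congrFun hv j
        rw [hAapp, if_neg hjne] at this
        simpa using this
      have hPkv : Pk v = v i0 • (Pi.single i0 (1:ℝ) : Fin n → ℝ) := by
        funext j
        rw [hPkapp]
        rw [Pi.smul_apply, Pi.single_apply, smul_eq_mul]
        by_cases hji : j = i0
        · subst hji; rw [if_pos h0k, if_pos rfl]; ring
        · rw [if_neg hji]
          by_cases hjk : j.1 < k
          · rw [if_pos hjk, hj j hji]; ring
          · rw [if_neg hjk]; ring
      have hi0v : v i0 = 0 := by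
        have := congrFun hv i0
        rw [hAapp, if_pos rfl] at this
        have hℓv : ℓ v = 0 := by simpa using this
        rw [hℓdef] at hℓv
        have : fderiv ℝ F x0 (Pk v) = 0 := hℓv
        rw [hPkv, map_smul, smul_eq_mul] at this
        exact (mul_eq_zero.1 this).resolve_right (hnz x0 hx0 i0 hi0k)
      funext j
      by_cases hji : j = i0
      · rw [hji]; exact hi0v
      · exact hj j hji
    intro v w hvw
    have := hker (v - w) (by rw [map_sub, hvw, sub_self])
    exact sub_eq_zero.1 this
  set Aeq : (Fin n → ℝ) ≃L[ℝ] (Fin n → ℝ) :=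
    (A.toLinearMap.linearEquivOfInjective hAinj rfl).toContinuousLinearEquiv with hAeqdef
  have hAeqcoe : (Aeq : (Fin n → ℝ) →L[ℝ] (Fin n → ℝ)) = A := by
    ext v
    rfl
  have hΦc2 : ContDiffAt ℝ 2 Φ x0 := by
    rw [hΦdef]
    exact contDiffAt_id.add
      ((hGc2.sub (((ContinuousLinearMap.proj i0).contDiff).contDiffAt)).smul contDiffAt_const)
  have hfd : HasFDerivAt Φ (Aeq : (Fin n → ℝ) →L[ℝ] (Fin n → ℝ)) x0 := by
    rw [hAeqcoe]; exact hΦ'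
  have hstr : HasStrictFDerivAt Φ (Aeq : (Fin n → ℝ) →L[ℝ] (Fin n → ℝ)) x0 :=
    hΦc2.hasStrictFDerivAt' hfd two_ne_zero
  set Ψ : (Fin n → ℝ) → (Fin n → ℝ) := hstr.localInverse Φ Aeq x0 with hΨdef
  have hΨc2 : ContDiffAt ℝ 2 Ψ (Φ x0) := hΦc2.to_localInverse hfd two_ne_zero
  have hΨΦx0 : Ψ (Φ x0) = x0 := hstr.localInverse_apply_image
  -- neighborhoods
  obtain ⟨u₁, hu₁, hΨu₁⟩ := hΨc2.contDiffOn le_rfl (by simp)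
  obtain ⟨W₂, hW₂sub, hW₂open, hW₂mem⟩ := _root_.eventually_nhds_iff.1 hstr.eventually_right_inverse
  obtain ⟨S, hSsub, hSopen, hSmem⟩ := _root_.eventually_nhds_iff.1 hstr.eventually_left_inverse
  obtain ⟨ε₀, hε₀, hε₀sub⟩ := Metric.isOpen_iff.1 hUopen x0 hx0
  have hΨcont : ContinuousAt Ψ (Φ x0) := hΨc2.continuousAt
  have hWmem : (interior u₁ ∩ W₂) ∩ Ψ ⁻¹' (ball x0 ε₀) ∈ 𝓝 (Φ x0) := by
    refine inter_mem (inter_mem (interior_mem_nhds.2 hu₁) (hW₂open.mem_nhds hW₂mem)) ?_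
    exact hΨcont.preimage_mem_nhds (by rw [hΨΦx0]; exact ball_mem_nhds _ hε₀)
  obtain ⟨η, hη, hηsub⟩ := Metric.mem_nhds_iff.1 hWmem
  -- the local h and its global extension
  set Ek : (Fin k → ℝ) →L[ℝ] (Fin n → ℝ) := ContinuousLinearMap.pi
    (fun i : Fin n => if hi : i.1 < k
      then ContinuousLinearMap.proj (⟨i.1, hi⟩ : Fin k) else 0) with hEkdef
  set w0 : Fin n → ℝ := fun i => if i.1 < k then 0 else x0 i with hw0def
  set hloc : (Fin k → ℝ) → ℝ := fun u => F (Ek u + w0) with hlocdef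
  have hEkapp : ∀ (u : Fin k → ℝ) i, (Ek u + w0) i
      = if hi : i.1 < k then u ⟨i.1, hi⟩ else x0 i := by
    intro u i
    rw [Pi.add_apply, hEkdef, ContinuousLinearMap.pi_apply, hw0def]
    by_cases h : i.1 < k <;> simp [h]
  set u0 : Fin k → ℝ := fun i => x0 ⟨i.1, by omega⟩ with hu0def
  have hEku0 : Ek u0 + w0 = x0 := by
    funext i
    rw [hEkapp]
    by_cases h : i.1 < k
    · rw [dif_pos h, hu0def]
    · rw [dif_neg h]
  have hlocc2 : ContDiffAt ℝ 2 hloc u0 := by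
    have h1 : ContDiffAt ℝ 2 F (Ek u0 + w0) := by rw [hEku0]; exact hFc2at x0 hx0
    exact h1.comp u0 ((Ek.contDiff.add contDiff_const).contDiffAt)
  obtain ⟨H, hHc2, hHev⟩ := exists_contDiff_extension hlocc2
  obtain ⟨rh, hrh, hrhball⟩ := Metric.eventually_nhds_iff_ball.1 hHev
  -- the local g and its global extension
  set t0 : ℝ := F x0 with ht0def
  have hGx0 : G x0 = t0 := by rw [hGdef]; dsimp only; rw [hGmix0]
  set upd : ℝ → (Fin n → ℝ) :=
    fun t => x0 + (t - x0 i0) • (Pi.single i0 (1:ℝ) : Fin n → ℝ) with hupddef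
  have hupdapp : ∀ t j, upd t j = if j = i0 then t else x0 j := by
    intro t j
    rw [hupddef]
    dsimp only
    rw [Pi.add_apply, Pi.smul_apply, Pi.single_apply, smul_eq_mul]
    by_cases h : j = i0
    · rw [if_pos h, if_pos h, h]; ring
    · rw [if_neg h, if_neg h]; ring
  have hΦx0upd : Φ x0 = upd t0 := by
    funext j
    rw [hΦapp, hupdapp, hGx0]
  have hupdc : ContDiff ℝ 2 upd := by
    rw [hupddef]
    exact contDiff_const.add ((contDiff_id.sub contDiff_const).smul contDiff_const)
  set J : (Fin (n - k) → ℝ) →L[ℝ] (Fin n → ℝ) := ContinuousLinearMap.pi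
    (fun i : Fin n => if hi : k ≤ i.1
      then ContinuousLinearMap.proj (⟨i.1 - k, by have := i.2; omega⟩ : Fin (n - k)) else 0)
    with hJdef
  set zax : ℝ × (Fin (n - k) → ℝ) → (Fin n → ℝ) :=
    fun p => Pk (Ψ (upd p.1)) + J p.2 with hzaxdef
  have hJapp : ∀ (v : Fin (n - k) → ℝ) i, J v i
      = if hi : k ≤ i.1 then v ⟨i.1 - k, by have := i.2; omega⟩ else 0 := by
    intro v i
    rw [hJdef, ContinuousLinearMap.pi_apply]
    by_cases h : k ≤ i.1 <;> simp [h]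
  have hzaxapp : ∀ p i, zax p i = if hi : k ≤ i.1
      then p.2 ⟨i.1 - k, by have := i.2; omega⟩ else Ψ (upd p.1) i := by
    intro p i
    rw [hzaxdef]
    dsimp only
    rw [Pi.add_apply, hPkapp, hJapp]
    by_cases h : k ≤ i.1
    · rw [dif_pos h, if_neg (by omega), dif_pos h]; ring
    · rw [dif_neg h, if_pos (by omega), dif_neg h]; ring
  set v0 : Fin (n - k) → ℝ := fun j => x0 ⟨k + j.1, by have := j.2; omega⟩ with hv0def
  have hzax0 : zax (t0, v0) = x0 := by
    funext i
    rw [hzaxapp]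
    by_cases h : k ≤ i.1
    · rw [dif_pos h, hv0def]
      dsimp only
      congr 1
      exact Fin.ext (by simp; omega)
    · rw [dif_neg h]
      have : upd ((t0, v0).1) = Φ x0 := by rw [← hΦx0upd]
      rw [this, hΨΦx0]
  set gloc : ℝ × (Fin (n - k) → ℝ) → ℝ := fun p => F (zax p) with hglocdef
  have hglocc2 : ContDiffAt ℝ 2 gloc (t0, v0) := by
    have houter : ContDiffAt ℝ 2 F (zax (t0, v0)) := by rw [hzax0]; exact hFc2at x0 hx0
    have hinner : ContDiffAt ℝ 2 zax (t0, v0) := by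
      rw [hzaxdef]
      have h1 : ContDiffAt ℝ 2 (fun p : ℝ × (Fin (n - k) → ℝ) => Ψ (upd p.1)) (t0, v0) := by
        have hupdfst : ContDiffAt ℝ 2 (fun p : ℝ × (Fin (n - k) → ℝ) => upd p.1) (t0, v0) :=
          hupdc.contDiffAt.comp _ contDiffAt_fst
        have hΨat : ContDiffAt ℝ 2 Ψ ((fun p : ℝ × (Fin (n - k) → ℝ) => upd p.1) (t0, v0)) := by
          dsimp only
          rw [← hΦx0upd]
          exact hΨc2
        exact hΨat.comp (t0, v0) hupdfst
      exact (Pk.contDiff.contDiffAt.comp (t0, v0) h1).add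
        (J.contDiff.contDiffAt.comp (t0, v0) contDiffAt_snd)
    exact houter.comp (t0, v0) hinner
  obtain ⟨Gg, hGgc2, hGgev⟩ := exists_contDiff_extension hglocc2
  obtain ⟨rg, hrg, hrgball⟩ := Metric.eventually_nhds_iff_ball.1 hGgev
  -- continuity of G at x0
  have hGcont : ContinuousAt G x0 := hGc2.continuousAt
  have hGev : ∀ᶠ y in 𝓝 x0, |G y - t0| < min η rg := by
    have : ball t0 (min η rg) ∈ 𝓝 (G x0) := by
      rw [hGx0]; exact ball_mem_nhds _ (lt_min hη hrg)
    filter_upwards [hGcont.preimage_mem_nhds this] with y hy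
    rw [← Real.dist_eq]
    exact mem_ball.1 hy
  obtain ⟨δG, hδG, hδGball⟩ := Metric.eventually_nhds_iff_ball.1 hGev
  obtain ⟨δS, hδS, hδSsub⟩ := Metric.mem_nhds_iff.1 (hSopen.mem_nhds hSmem)
  -- choice of δ
  set δ : ℝ := min (min (min ε₀ δS) (min rh δG)) (min rg η) with hδdef
  have hδpos : 0 < δ := by
    refine lt_min (lt_min (lt_min hε₀ hδS) (lt_min hrh hδG)) (lt_min hrg hη)
  have hδε₀ : δ ≤ ε₀ := le_trans (min_le_left _ _) (le_trans (min_le_left _ _) (min_le_left _ _))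
  have hδS' : δ ≤ δS := le_trans (min_le_left _ _) (le_trans (min_le_left _ _) (min_le_right _ _))
  have hδrh : δ ≤ rh := le_trans (min_le_left _ _) (le_trans (min_le_right _ _) (min_le_left _ _))
  have hδδG : δ ≤ δG := le_trans (min_le_left _ _) (le_trans (min_le_right _ _) (min_le_right _ _))
  have hδrg : δ ≤ rg := le_trans (min_le_right _ _) (min_le_left _ _)
  have hδη : δ ≤ η := le_trans (min_le_right _ _) (min_le_right _ _)
  refine ⟨ball x0 δ, isOpen_ball, mem_ball_self hδpos,
    (ball_subset_ball hδε₀).trans hε₀sub, H, Gg, hHc2, hGgc2, ?_⟩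
  intro y hyV
  have hdyx0 : dist y x0 < δ := mem_ball.1 hyV
  have hyU : y ∈ U := hε₀sub (mem_ball.2 (lt_of_lt_of_le hdyx0 hδε₀))
  set ty : ℝ := G y with htydef
  have htyb : |ty - t0| < min η rg := hδGball y (mem_ball.2 (lt_of_lt_of_le hdyx0 hδδG))
  have htyη : |ty - t0| < η := lt_of_lt_of_le htyb (min_le_left _ _)
  have htyrg : |ty - t0| < rg := lt_of_lt_of_le htyb (min_le_right _ _)
  set dA : Fin n → ℝ := fun i => if i = i0 then 0 else if i.1 < k then x0 i - y i else 0
    with hdAdef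
  set A0 : Fin n → ℝ := fun i => if i = i0 then ty else if i.1 < k then y i else x0 i
    with hA0def
  set Ay : ℝ → (Fin n → ℝ) := fun s => A0 + s • dA with hAydef
  have hAyapp : ∀ s i, Ay s i
      = if i = i0 then ty else if i.1 < k then y i + s * (x0 i - y i) else x0 i := by
    intro s i
    rw [hAydef]
    dsimp only
    rw [Pi.add_apply, Pi.smul_apply, hA0def, hdAdef, smul_eq_mul]
    by_cases h1 : i = i0
    · simp [h1]
    · by_cases h2 : i.1 < k <;> simp [h1, h2]
  have hΦx0app : ∀ j, Φ x0 j = if j = i0 then t0 else x0 j := by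
    intro j; rw [hΦapp, hGx0]
  have hAyball : ∀ s ∈ Icc (0:ℝ) 1, Ay s ∈ ball (Φ x0) η := by
    intro s hs
    rw [mem_ball, dist_pi_lt_iff hη]
    intro i
    rw [hAyapp, hΦx0app, Real.dist_eq]
    by_cases h1 : i = i0
    · rw [if_pos h1, if_pos h1]; exact htyη
    · rw [if_neg h1, if_neg h1]
      by_cases h2 : i.1 < k
      · rw [if_pos h2]
        have heq : y i + s * (x0 i - y i) - x0 i = (1 - s) * (y i - x0 i) := by ring
        rw [heq, abs_mul]
        have h1s : |1 - s| ≤ 1 := by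
          rw [abs_le]
          constructor
          · linarith [hs.2]
          · linarith [hs.1]
        have h2s : |y i - x0 i| ≤ dist y x0 := by
          rw [← Real.dist_eq]; exact dist_le_pi_dist y x0 i
        calc |1 - s| * |y i - x0 i| ≤ 1 * dist y x0 :=
              mul_le_mul h1s h2s (abs_nonneg _) zero_le_one
          _ < η := by rw [one_mul]; exact lt_of_lt_of_le hdyx0 hδη
      · rw [if_neg h2]; simpa using hη
  set Q : ℝ → (Fin n → ℝ) := fun s => Ψ (Ay s) with hQdef
  set P : ℝ → (Fin n → ℝ) := fun s => Pk (Q s) + Pk' y with hPdef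
  have hball_fact : ∀ w ∈ ball (Φ x0) η, Φ (Ψ w) = w ∧ Ψ w ∈ ball x0 ε₀ ∧ w ∈ interior u₁ := by
    intro w hw
    have h1 := hηsub hw
    exact ⟨hW₂sub w h1.1.2, h1.2, h1.1.1⟩
  have hQco : ∀ s, Ay s ∈ ball (Φ x0) η → ∀ j, j ≠ i0 → Q s j = Ay s j := by
    intro s hs j hj
    have hΦΨ := (hball_fact _ hs).1
    have h2 := congrFun hΦΨ j
    rw [hΦapp, if_neg hj] at h2
    exact h2
  have hQty : ∀ s, Ay s ∈ ball (Φ x0) η → G (Q s) = ty := by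
    intro s hs
    have hΦΨ := (hball_fact _ hs).1
    have h2 := congrFun hΦΨ i0
    rw [hΦapp, if_pos rfl, hAyapp, if_pos rfl] at h2
    exact h2
  have hQU : ∀ s, Ay s ∈ ball (Φ x0) η → Q s ∈ U := fun s hs => hε₀sub (hball_fact _ hs).2.1
  have hQmix : ∀ s, Ay s ∈ ball (Φ x0) η → Pk (Q s) + Pk' x0 = Q s := by
    intro s hs
    funext i
    rw [hmixco]
    by_cases h : i.1 < k
    · rw [if_pos h]
    · rw [if_neg h]
      have hine : i ≠ i0 := by
        intro he
        rw [he] at h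
        exact h hi0k
      rw [hQco s hs i hine, hAyapp, if_neg hine, if_neg h]
  have hFQty : ∀ s, Ay s ∈ ball (Φ x0) η → F (Q s) = ty := by
    intro s hs
    have h1 := hQty s hs
    rw [hGdef] at h1
    dsimp only at h1
    rw [hQmix s hs] at h1
    exact h1
  have hPco : ∀ s i, P s i = if i.1 < k then Q s i else y i := fun s i => hmixco _ _ i
  have hPU : ∀ s, Ay s ∈ ball (Φ x0) η → P s ∈ U := by
    intro s hs
    apply hε₀sub
    rw [mem_ball, dist_pi_lt_iff hε₀]
    intro i
    rw [hPco]
    by_cases h : i.1 < k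
    · rw [if_pos h]
      exact lt_of_le_of_lt (dist_le_pi_dist (Q s) x0 i) (mem_ball.1 (hball_fact _ hs).2.1)
    · rw [if_neg h]
      exact lt_of_le_of_lt (dist_le_pi_dist y x0 i) (lt_of_lt_of_le hdyx0 hδε₀)
  have hAycont : Continuous Ay := by
    rw [hAydef]
    exact continuous_const.add (continuous_id.smul continuous_const)
  have hderiv0 : ∀ s0 ∈ Icc (0:ℝ) 1, HasDerivAt (fun s => F (P s)) 0 s0 := by
    intro s0 hs0
    have hs0b := hAyball s0 hs0
    have hev : ∀ᶠ s in 𝓝 s0, Ay s ∈ ball (Φ x0) η :=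
      hAycont.continuousAt.preimage_mem_nhds (isOpen_ball.mem_nhds hs0b)
    have hAy' : HasDerivAt Ay dA s0 := by
      rw [hAydef]
      simpa using ((hasDerivAt_id s0).smul_const dA).const_add A0
    have hAyW₁ : Ay s0 ∈ interior u₁ := (hball_fact _ hs0b).2.2
    have hΨdiff : HasFDerivAt Ψ (fderiv ℝ Ψ (Ay s0)) (Ay s0) :=
      ((((hΨu₁.mono interior_subset).differentiableOn (by norm_num)).differentiableAt
        (isOpen_interior.mem_nhds hAyW₁))).hasFDerivAt
    set w' : Fin n → ℝ := fderiv ℝ Ψ (Ay s0) dA with hw'def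
    have hQ' : HasDerivAt Q w' s0 := hΨdiff.comp_hasDerivAt s0 hAy'
    have hw'tail : ∀ i : Fin n, ¬(i.1 < k) → w' i = 0 := by
      intro i hik
      have hine : i ≠ i0 := by
        intro he
        rw [he] at hik
        exact hik hi0k
      have hproj : HasDerivAt (fun s => Q s i) (w' i) s0 := by
        have h1 := (ContinuousLinearMap.proj (R := ℝ) (φ := fun _ : Fin n => ℝ)
          i).hasFDerivAt.comp_hasDerivAt s0 hQ'
        simpa [Function.comp_def] using h1
      have hconst : ∀ᶠ s in 𝓝 s0, Q s i = x0 i := by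
        filter_upwards [hev] with s hs
        rw [hQco s hs i hine, hAyapp, if_neg hine, if_neg hik]
      have h0 : HasDerivAt (fun s => Q s i) 0 s0 :=
        (hasDerivAt_const s0 (x0 i)).congr_of_eventuallyEq hconst
      exact hproj.unique h0
    have hFQ' : HasDerivAt (fun s => F (Q s)) (fderiv ℝ F (Q s0) w') s0 :=
      (hFd _ (hQU s0 hs0b)).comp_hasDerivAt s0 hQ'
    have hFQconst : ∀ᶠ s in 𝓝 s0, F (Q s) = ty := by
      filter_upwards [hev] with s hs
      exact hFQty s hs
    have hFQzero : fderiv ℝ F (Q s0) w' = 0 :=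
      hFQ'.unique ((hasDerivAt_const s0 ty).congr_of_eventuallyEq hFQconst)
    have hPkw' : Pk w' = w' := by
      funext i
      rw [hPkapp]
      by_cases h : i.1 < k
      · rw [if_pos h]
      · rw [if_neg h, hw'tail i h]
    have hP' : HasDerivAt P w' s0 := by
      have h1 : HasDerivAt (fun s => Pk (Q s)) (Pk w') s0 :=
        Pk.hasFDerivAt.comp_hasDerivAt s0 hQ'
      have h2 := h1.add_const (Pk' y)
      rw [hPkw'] at h2
      exact h2
    have hFP' : HasDerivAt (fun s => F (P s)) (fderiv ℝ F (P s0) w') s0 :=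
      (hFd _ (hPU s0 hs0b)).comp_hasDerivAt s0 hP'
    have hc0 : fderiv ℝ F (Q s0) (Pi.single i0 1) ≠ 0 := hnz _ (hQU s0 hs0b) i0 hi0k
    have hzero : fderiv ℝ F (P s0) w' = 0 := by
      have hmul : fderiv ℝ F (P s0) w' * fderiv ℝ F (Q s0) (Pi.single i0 1)
          = fderiv ℝ F (Q s0) w' * fderiv ℝ F (P s0) (Pi.single i0 1) := by
        rw [clm_pi_expand (fderiv ℝ F (P s0)) w', clm_pi_expand (fderiv ℝ F (Q s0)) w',
          Finset.sum_mul, Finset.sum_mul]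
        refine Finset.sum_congr rfl fun i _ => ?_
        by_cases hik : i.1 < k
        · have hpr := prop_ratio hUopen hUconv hFsm hnz hpde hik hi0k
            (hPU s0 hs0b) (hQU s0 hs0b) (fun j hj => by rw [hPco, if_pos hj])
          linear_combination w' i * hpr
        · rw [hw'tail i hik]; ring
      rw [hFQzero, zero_mul] at hmul
      exact (mul_eq_zero.1 hmul).resolve_right hc0
    rw [← hzero]
    exact hFP'
  have hFPcont : ContinuousOn (fun s => F (P s)) (Icc 0 1) :=
    fun s hs => ((hderiv0 s hs).continuousAt).continuousWithinAt
  have hconst := constant_of_has_deriv_right_zero hFPcont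
    (fun s hs => (hderiv0 s (Ico_subset_Icc_self hs)).hasDerivWithinAt)
  have hP10 : F (P 1) = F (P 0) := hconst 1 (by norm_num)
  -- endpoint 0
  have hGmixy : G (Pk y + Pk' x0) = G y := by
    rw [hGdef]
    dsimp only
    congr 1
    funext i
    rw [hmixco, hmixco]
    split_ifs <;> rfl
  have hmixyS : Pk y + Pk' x0 ∈ S := by
    apply hδSsub
    rw [mem_ball, dist_pi_lt_iff hδS]
    intro i
    rw [hmixco]
    by_cases h : i.1 < k
    · rw [if_pos h]
      exact lt_of_le_of_lt (dist_le_pi_dist y x0 i) (lt_of_lt_of_le hdyx0 hδS')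
    · rw [if_neg h]; simpa using hδS
  have hA0app : ∀ j : Fin n, A0 j = if j = i0 then ty else if j.1 < k then y j else x0 j :=
    fun j => rfl
  have hA0Φ : A0 = Φ (Pk y + Pk' x0) := by
    funext j
    rw [hA0app, hΦapp]
    by_cases h1 : j = i0
    · rw [if_pos h1, if_pos h1, hGmixy]
    · rw [if_neg h1, if_neg h1, hmixco]
  have hAy0 : Ay 0 = A0 := by
    rw [hAydef]
    dsimp only
    rw [zero_smul, add_zero]
  have hQ0 : Q 0 = Pk y + Pk' x0 := by
    rw [hQdef]
    dsimp only
    rw [hAy0, hA0Φ]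
    exact hSsub _ hmixyS
  have hP0 : P 0 = y := by
    funext i
    rw [hPco]
    by_cases h : i.1 < k
    · rw [if_pos h, hQ0, hmixco, if_pos h]
    · rw [if_neg h]
  -- endpoint 1
  have hAy1 : Ay 1 = upd ty := by
    funext i
    rw [hAyapp, hupdapp]
    by_cases h1 : i = i0
    · rw [if_pos h1, if_pos h1]
    · rw [if_neg h1, if_neg h1]
      by_cases h2 : i.1 < k
      · rw [if_pos h2]; ring
      · rw [if_neg h2]
  set ytail : Fin (n - k) → ℝ := fun j => y ⟨k + j.1, by have := j.2; omega⟩ with hytaildef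
  have hP1 : P 1 = zax (ty, ytail) := by
    funext i
    rw [hPco, hzaxapp]
    by_cases h : i.1 < k
    · rw [if_pos h, dif_neg (by omega)]
      rw [hQdef]
      dsimp only
      rw [hAy1]
    · rw [if_neg h, dif_pos (by omega)]
      rw [hytaildef]
      dsimp only
      congr 1
      exact Fin.ext (show i.1 = k + (i.1 - k) by omega)
  -- evaluating H and Gg
  have hheadball : dist (fun i : Fin k => y (Fin.castLE (by omega : k ≤ n) i)) u0 < rh := by
    apply lt_of_le_of_lt ?_ (lt_of_lt_of_le hdyx0 hδrh)
    rw [dist_pi_le_iff dist_nonneg]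
    intro i
    rw [hu0def]
    exact dist_le_pi_dist y x0 ⟨i.1, by omega⟩
  have hHval : H (fun i : Fin k => y (Fin.castLE (by omega : k ≤ n) i)) = ty := by
    rw [hrhball _ (mem_ball.2 hheadball), hlocdef]
    dsimp only
    have harg : Ek (fun i : Fin k => y (Fin.castLE (by omega : k ≤ n) i)) + w0
        = Pk y + Pk' x0 := by
      funext i
      rw [hEkapp, hmixco]
      by_cases h : i.1 < k
      · rw [dif_pos h, if_pos h]
        rfl
      · rw [dif_neg h, if_neg h]
    rw [harg, htydef, hGdef]
  have hpairball : dist (ty, ytail) (t0, v0) < rg := by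
    rw [Prod.dist_eq]
    apply max_lt
    · rw [Real.dist_eq]; exact htyrg
    · apply lt_of_le_of_lt ?_ (lt_of_lt_of_le hdyx0 hδrg)
      rw [dist_pi_le_iff dist_nonneg]
      intro j
      rw [hytaildef, hv0def]
      exact dist_le_pi_dist y x0 ⟨k + j.1, by have := j.2; omega⟩
  have hGgval : Gg (ty, ytail) = F (zax (ty, ytail)) := by
    rw [hrgball _ (mem_ball.2 hpairball), hglocdef]
  calc F y = F (P 0) := by rw [hP0]
    _ = F (P 1) := hP10.symm
    _ = F (zax (ty, ytail)) := by rw [hP1]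
    _ = Gg (ty, ytail) := hGgval.symm
    _ = Gg (H (fun i : Fin k => y (Fin.castLE (by omega : k ≤ n) i)), ytail) := by
        rw [hHval]
end

section
/- Let U = I₁ × I₂ × I₃ ⊆ ℝ³ be a product of open intervals and let F : U → ℝ be a C² function with ∂F/∂x₁ ≠ 0 and ∂F/∂x₂ ≠ 0 on U. Then every point of U has an open neighborhood on which F admits a decomposition F(x₁,x₂,x₃) = g(h(x₁,x₂), x₃) for some C² functions h of two variables and g of two variables if and only if F satisfies on U the second-order nonlinear partial differential equation F₃₁·F₂ = F₃₂·F₁ (i.e., F₃₁/F₃₂ = F₁/F₂), where F_i = ∂F/∂x_i and F_{3i} = ∂²F/∂x₃∂x_i. -/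
noncomputable section
open Filter

namespace Stmt7Aux

def E3 (i : Fin 3) : Fin 3 → ℝ := Pi.single i 1

def v3 (x y z : ℝ) : Fin 3 → ℝ := fun i => if i = 0 then x else if i = 1 then y else z

lemma v3_eq (x y z : ℝ) : v3 x y z = x • E3 0 + y • E3 1 + z • E3 2 := by
  funext i; fin_cases i <;> simp [v3, E3]

lemma v3_self (y : Fin 3 → ℝ) : v3 (y 0) (y 1) (y 2) = y := by
  funext i; fin_cases i <;> simp [v3]

lemma clm_v3 (L : (Fin 3 → ℝ) →L[ℝ] ℝ) (x y z : ℝ) :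
    L (v3 x y z) = x * L (E3 0) + y * L (E3 1) + z * L (E3 2) := by
  rw [v3_eq]; simp

lemma hasFDerivAt_v3 {E : Type*} [NormedAddCommGroup E] [NormedSpace ℝ E]
    {f g k : E → ℝ} {f' g' k' : E →L[ℝ] ℝ} {x : E}
    (hf : HasFDerivAt f f' x) (hg : HasFDerivAt g g' x) (hk : HasFDerivAt k k' x) :
    HasFDerivAt (fun y => v3 (f y) (g y) (k y))
      (f'.smulRight (E3 0) + g'.smulRight (E3 1) + k'.smulRight (E3 2)) x := by
  have h : (fun y => v3 (f y) (g y) (k y))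
      = fun y => f y • E3 0 + g y • E3 1 + k y • E3 2 := by
    funext y; rw [v3_eq]
  rw [h]
  exact ((hf.smul_const _).add (hg.smul_const _)).add (hk.smul_const _)


/-- smooth truncation: identity on `[-r/2, r/2]`, range inside `(-r, r)`. -/
def tr (r t : ℝ) : ℝ := t / (1 + (t / r) ^ 2 * Real.smoothTransition (4 * (t / r) ^ 2 - 1))

lemma tr_denom_pos (r t : ℝ) :
    0 < 1 + (t / r) ^ 2 * Real.smoothTransition (4 * (t / r) ^ 2 - 1) := by
  have h1 : 0 ≤ (t / r) ^ 2 * Real.smoothTransition (4 * (t / r) ^ 2 - 1) :=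
    mul_nonneg (sq_nonneg _) (Real.smoothTransition.nonneg _)
  linarith

lemma tr_contDiff (r : ℝ) : ContDiff ℝ 2 (tr r) := by
  apply ContDiff.div contDiff_id
  · exact contDiff_const.add
      (((contDiff_id.div_const r).pow 2).mul
        ((Real.smoothTransition.contDiff (n := 2)).comp
          ((contDiff_const.mul ((contDiff_id.div_const r).pow 2)).sub contDiff_const)))
  · intro t
    exact ne_of_gt (tr_denom_pos r t)

lemma tr_eq_self {r t : ℝ} (hr : 0 < r) (h : |t| ≤ r / 2) : tr r t = t := by
  have h2 : (t / r) ^ 2 ≤ (1 / 2 : ℝ) ^ 2 := by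
    rw [div_pow, div_le_iff₀ (by positivity)]
    have := abs_le.1 h
    nlinarith [sq_abs t, abs_nonneg t, sq_nonneg (r/2)]
  have h3 : 4 * (t / r) ^ 2 - 1 ≤ 0 := by nlinarith
  rw [tr, Real.smoothTransition.zero_of_nonpos h3]
  norm_num

lemma tr_abs_lt {r : ℝ} (hr : 0 < r) (t : ℝ) : |tr r t| < r := by
  set u := t / r with hu
  set T := Real.smoothTransition (4 * u ^ 2 - 1) with hT
  have hTnn : 0 ≤ T := Real.smoothTransition.nonneg _
  have hd : 0 < 1 + u ^ 2 * T := by nlinarith [sq_nonneg u, mul_nonneg (sq_nonneg u) hTnn]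
  have key : |u| < 1 + u ^ 2 * T := by
    rcases lt_or_ge (|u|) 1 with h | h
    · nlinarith [mul_nonneg (sq_nonneg u) hTnn]
    · have hu2 : 1 ≤ u ^ 2 := by nlinarith [sq_abs u]
      have hT1 : T = 1 := Real.smoothTransition.one_of_one_le (by nlinarith)
      rw [hT1, mul_one]; nlinarith [sq_abs u, abs_nonneg u]
  have habs : |tr r t| = |t| / (1 + u ^ 2 * T) := by
    rw [tr, ← hu, ← hT, abs_div, abs_of_pos hd]
  have ht : |t| = |u| * r := by
    rw [hu, abs_div, abs_of_pos hr]; field_simp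
  rw [habs, div_lt_iff₀ hd, ht]
  nlinarith [abs_nonneg u]

/-- retraction of the plane onto a small ball around `c`, identity near `c`. -/
def rho (c : ℝ × ℝ) (r : ℝ) (p : ℝ × ℝ) : ℝ × ℝ :=
  (c.1 + tr r (p.1 - c.1), c.2 + tr r (p.2 - c.2))

lemma rho_contDiff (c : ℝ × ℝ) (r : ℝ) : ContDiff ℝ 2 (rho c r) := by
  apply ContDiff.prodMk
  · exact contDiff_const.add ((tr_contDiff r).comp (contDiff_fst.sub contDiff_const))
  · exact contDiff_const.add ((tr_contDiff r).comp (contDiff_snd.sub contDiff_const))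

lemma rho_mem_ball {c : ℝ × ℝ} {r : ℝ} (hr : 0 < r) (p : ℝ × ℝ) :
    rho c r p ∈ Metric.ball c r := by
  rw [Metric.mem_ball, Prod.dist_eq, max_lt_iff]
  constructor <;>
  · rw [Real.dist_eq]
    simpa [rho] using tr_abs_lt hr _

lemma rho_eq_self {c : ℝ × ℝ} {r : ℝ} (hr : 0 < r) {p : ℝ × ℝ}
    (hp : p ∈ Metric.ball c (r / 2)) : rho c r p = p := by
  rw [Metric.mem_ball, Prod.dist_eq, max_lt_iff, Real.dist_eq, Real.dist_eq] at hp
  have e1 := tr_eq_self hr (le_of_lt hp.1)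
  have e2 := tr_eq_self hr (le_of_lt hp.2)
  rw [rho, e1, e2]
  ext <;> ring

/-- C² extension lemma: a function C² at a point agrees near that point with a globally
C² function. -/
lemma extend2 {f : ℝ × ℝ → ℝ} {c : ℝ × ℝ} (hf : ContDiffAt ℝ 2 f c) :
    ∃ g : ℝ × ℝ → ℝ, ContDiff ℝ 2 g ∧ ∀ᶠ p in nhds c, g p = f p := by
  obtain ⟨u, hu, hfu⟩ := hf.contDiffOn le_rfl (by simp)
  obtain ⟨r, hr, hball⟩ := Metric.mem_nhds_iff.1 hu
  refine ⟨f ∘ rho c r, ?_, ?_⟩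
  · exact (hfu.mono hball).comp_contDiff (rho_contDiff c r) (fun p => rho_mem_ball hr p)
  · filter_upwards [Metric.ball_mem_nhds c (by linarith : (0:ℝ) < r / 2)] with p hp
    simp [Function.comp, rho_eq_self hr hp]


lemma ratio_const
    (I : Fin 3 → Set ℝ) (hIopen : ∀ i, IsOpen (I i)) (hIconn : ∀ i, (I i).OrdConnected)
    (U : Set (Fin 3 → ℝ)) (hU : U = {x | ∀ i, x i ∈ I i}) (hUopen : IsOpen U)
    (F : (Fin 3 → ℝ) → ℝ) (hFsm : ContDiffOn ℝ 2 F U)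
    (h2 : ∀ x ∈ U, fderiv ℝ F x (E3 1) ≠ 0)
    (hpde : ∀ x ∈ U,
      fderiv ℝ (fun y => fderiv ℝ F y (E3 0)) x (E3 2) * fderiv ℝ F x (E3 1) =
        fderiv ℝ (fun y => fderiv ℝ F y (E3 1)) x (E3 2) * fderiv ℝ F x (E3 0))
    (y : Fin 3 → ℝ) (hy : y ∈ U) (t : ℝ) (ht : t ∈ I 2) :
    fderiv ℝ F y (E3 0) * fderiv ℝ F (Function.update y 2 t) (E3 1)
      = fderiv ℝ F y (E3 1) * fderiv ℝ F (Function.update y 2 t) (E3 0) := by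
  classical
  set F1 : (Fin 3 → ℝ) → ℝ := fun z => fderiv ℝ F z (E3 0) with hF1
  set F2 : (Fin 3 → ℝ) → ℝ := fun z => fderiv ℝ F z (E3 1) with hF2
  have hdiff : ∀ z ∈ U, DifferentiableAt ℝ F1 z ∧ DifferentiableAt ℝ F2 z := by
    intro z hz
    have hFat : ContDiffAt ℝ 2 F z := hFsm.contDiffAt (hUopen.mem_nhds hz)
    have hD : ContDiffAt ℝ 1 (fderiv ℝ F) z := hFat.fderiv_right (m := 1) (by norm_num)
    constructor
    · exact ((hD.clm_apply (contDiffAt_const (c := E3 0))).differentiableAt (by norm_num))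
    · exact ((hD.clm_apply (contDiffAt_const (c := E3 1))).differentiableAt (by norm_num))
  set ℓ : ℝ → (Fin 3 → ℝ) := fun s => Function.update y 2 s with hℓ
  have hℓmem : ∀ s, s ∈ I 2 → ℓ s ∈ U := by
    intro s hs
    rw [hU] at hy ⊢
    intro i
    rcases eq_or_ne i 2 with rfl | hne
    · simpa [hℓ] using hs
    · simpa [hℓ, Function.update_apply, hne] using hy i
  have hℓder : ∀ s : ℝ, HasDerivAt ℓ (E3 2) s := by
    intro s
    have hform : ℓ = fun s => Function.update y 2 (0:ℝ) + s • E3 2 := by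
      funext s i
      rcases eq_or_ne i 2 with rfl | hne
      · simp [hℓ, E3, Pi.single_apply]
      · simp [hℓ, E3, Function.update_apply, hne, Pi.single_apply]
    rw [hform]
    simpa using ((hasDerivAt_id s).smul_const (E3 2)).const_add (Function.update y 2 (0:ℝ))
  set ρ : ℝ → ℝ := fun s => F1 (ℓ s) / F2 (ℓ s) with hρ
  have hρder : ∀ s ∈ I 2, HasDerivAt ρ 0 s := by
    intro s hs
    have hsU : ℓ s ∈ U := hℓmem s hs
    have d1 : HasDerivAt (fun s => F1 (ℓ s)) (fderiv ℝ F1 (ℓ s) (E3 2)) s :=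
      ((hdiff _ hsU).1.hasFDerivAt).comp_hasDerivAt s (hℓder s)
    have d2 : HasDerivAt (fun s => F2 (ℓ s)) (fderiv ℝ F2 (ℓ s) (E3 2)) s :=
      ((hdiff _ hsU).2.hasFDerivAt).comp_hasDerivAt s (hℓder s)
    have hdiv := d1.div d2 (h2 _ hsU)
    have hnum : (fderiv ℝ F1 (ℓ s) (E3 2) * F2 (ℓ s) -
        F1 (ℓ s) * fderiv ℝ F2 (ℓ s) (E3 2)) / F2 (ℓ s) ^ 2 = 0 := by
      rw [show fderiv ℝ F1 (ℓ s) (E3 2) * F2 (ℓ s) -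
          F1 (ℓ s) * fderiv ℝ F2 (ℓ s) (E3 2) = 0 from by
        linear_combination hpde (ℓ s) hsU, zero_div]
    exact hnum ▸ hdiv
  have hIc : Convex ℝ (I 2) := (hIconn 2).convex
  have hdiffOn : DifferentiableOn ℝ ρ (I 2) := fun s hs =>
    ((hρder s hs).differentiableAt).differentiableWithinAt
  have hzero : ∀ s ∈ I 2, fderivWithin ℝ ρ (I 2) s = 0 := by
    intro s hs
    rw [fderivWithin_of_isOpen (hIopen 2) hs, (hρder s hs).hasFDerivAt.fderiv]
    ext u
    simp
  have hy2 : y 2 ∈ I 2 := by rw [hU] at hy; exact hy 2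
  have hconst : ρ (y 2) = ρ t :=
    hIc.is_const_of_fderivWithin_eq_zero hdiffOn hzero hy2 ht
  have hupd : ℓ (y 2) = y := Function.update_eq_self 2 y
  rw [hρ] at hconst
  simp only [hupd] at hconst
  have hcross := (div_eq_div_iff (h2 y hy) (h2 (ℓ t) (hℓmem t ht))).1 hconst
  have : ℓ t = Function.update y 2 t := rfl
  rw [← this]
  linarith [hcross]


lemma clm2 (L : (ℝ × ℝ) →L[ℝ] ℝ) (v : ℝ × ℝ) :
    L v = v.1 * L (1, 0) + v.2 * L (0, 1) := by
  have h : v = v.1 • ((1:ℝ), (0:ℝ)) + v.2 • ((0:ℝ), (1:ℝ)) := by ext <;> simp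
  rw [show L v = L (v.1 • ((1:ℝ), (0:ℝ)) + v.2 • ((0:ℝ), (1:ℝ))) from by rw [← h]]
  rw [map_add, map_smul, map_smul, smul_eq_mul, smul_eq_mul]

/-- Forward direction core computation. -/
lemma fwd_pde {F : (Fin 3 → ℝ) → ℝ} {x : Fin 3 → ℝ} {V : Set (Fin 3 → ℝ)}
    (hVopen : IsOpen V) (hxV : x ∈ V)
    {h g : ℝ × ℝ → ℝ} (hh : ContDiff ℝ 2 h) (hg : ContDiff ℝ 2 g)
    (heq : ∀ y ∈ V, F y = g (h (y 0, y 1), y 2)) :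
    fderiv ℝ (fun y => fderiv ℝ F y (Pi.single 0 1)) x (Pi.single 2 1) *
        fderiv ℝ F x (Pi.single 1 1) =
      fderiv ℝ (fun y => fderiv ℝ F y (Pi.single 1 1)) x (Pi.single 2 1) *
        fderiv ℝ F x (Pi.single 0 1) := by
  classical
  set Q : (Fin 3 → ℝ) →L[ℝ] ℝ × ℝ :=
    (ContinuousLinearMap.proj 0).prod (ContinuousLinearMap.proj 1) with hQ
  set R : (Fin 3 → ℝ) →L[ℝ] ℝ := ContinuousLinearMap.proj 2 with hR
  have hQ0 : Q (E3 0) = (1, 0) := by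
    simp [hQ, E3, ContinuousLinearMap.proj_apply, Pi.single_apply]
  have hQ1 : Q (E3 1) = (0, 1) := by
    simp [hQ, E3, ContinuousLinearMap.proj_apply, Pi.single_apply]
  have hQ2 : Q (E3 2) = (0, 0) := by
    simp [hQ, E3, ContinuousLinearMap.proj_apply, Pi.single_apply]
  have hR0 : R (E3 0) = 0 := by simp [hR, E3, Pi.single_apply]
  have hR1 : R (E3 1) = 0 := by simp [hR, E3, Pi.single_apply]
  have hR2 : R (E3 2) = 1 := by simp [hR, E3, Pi.single_apply]
  set G : (Fin 3 → ℝ) → ℝ := fun y => g (h (Q y), R y) with hGdef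
  have hFG : F =ᶠ[nhds x] G := by
    filter_upwards [hVopen.mem_nhds hxV] with y hy
    rw [heq y hy]; rfl
  have hhd : Differentiable ℝ h := hh.differentiable (by norm_num)
  have hgd : Differentiable ℝ g := hg.differentiable (by norm_num)
  have hP : ∀ y, HasFDerivAt (fun y => (h (Q y), R y))
      (((fderiv ℝ h (Q y)).comp Q).prod R) y := fun y =>
    (((hhd (Q y)).hasFDerivAt).comp y Q.hasFDerivAt).prodMk R.hasFDerivAt
  have hGder : ∀ y, HasFDerivAt G
      ((fderiv ℝ g (h (Q y), R y)).comp (((fderiv ℝ h (Q y)).comp Q).prod R)) y := fun y =>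
    ((hgd _).hasFDerivAt).comp y (hP y)
  set g1 : ℝ × ℝ → ℝ := fun z => fderiv ℝ g z (1, 0) with hg1def
  have hg1 : ContDiff ℝ 1 g1 :=
    (hg.fderiv_right (by norm_num)).clm_apply contDiff_const
  have hGe : ∀ (e : Fin 3 → ℝ) (w : ℝ × ℝ), Q e = w → R e = 0 →
      ∀ y, fderiv ℝ G y e = fderiv ℝ h (Q y) w * g1 (h (Q y), R y) := by
    intro e w hQe hRe y
    rw [(hGder y).fderiv]
    rw [ContinuousLinearMap.comp_apply,
      show (((fderiv ℝ h (Q y)).comp Q).prod R) e = (fderiv ℝ h (Q y) w, 0) by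
        simp [ContinuousLinearMap.prod_apply, hQe, hRe],
      clm2]
    simp [hg1def]
  have main : ∀ (e : Fin 3 → ℝ) (w : ℝ × ℝ), Q e = w → R e = 0 →
      fderiv ℝ (fun y => fderiv ℝ F y e) x (E3 2) =
        fderiv ℝ h (Q x) w * fderiv ℝ g1 (h (Q x), R x) (0, 1) := by
    intro e w hQe hRe
    set hw : ℝ × ℝ → ℝ := fun p => fderiv ℝ h p w with hhwdef
    have hder : ContDiff ℝ 1 (fderiv ℝ h) := hh.fderiv_right (by norm_num)
    have hhw : ContDiff ℝ 1 hw := by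
      rw [hhwdef]
      exact hder.clm_apply (contDiff_const (c := w))
    have he1 : (fun y => fderiv ℝ F y e) =ᶠ[nhds x]
        (fun y => hw (Q y) * g1 (h (Q y), R y)) := by
      filter_upwards [hFG.fderiv (𝕜 := ℝ)] with y hy
      rw [hy, hGe e w hQe hRe y]
    rw [he1.fderiv_eq]
    -- derivatives of the two factors
    have d1 : HasFDerivAt (fun y => hw (Q y)) ((fderiv ℝ hw (Q x)).comp Q) x :=
      ((hhw.differentiable (by norm_num) (Q x)).hasFDerivAt).comp x Q.hasFDerivAt
    have d2 : HasFDerivAt (fun y => g1 (h (Q y), R y))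
        ((fderiv ℝ g1 (h (Q x), R x)).comp (((fderiv ℝ h (Q x)).comp Q).prod R)) x :=
      ((hg1.differentiable (by norm_num) _).hasFDerivAt).comp x (hP x)
    have dprod := d1.mul d2
    rw [show (fun y => hw (Q y) * g1 (h (Q y), R y)) =
      ((fun y => hw (Q y)) * fun y => g1 (h (Q y), R y)) from rfl, dprod.fderiv]
    have e1 : ((fderiv ℝ hw (Q x)).comp Q) (E3 2) = 0 := by
      rw [ContinuousLinearMap.comp_apply, hQ2,
        show ((0:ℝ), (0:ℝ)) = (0 : ℝ × ℝ) from rfl, map_zero]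
    have e2 : ((fderiv ℝ g1 (h (Q x), R x)).comp
        (((fderiv ℝ h (Q x)).comp Q).prod R)) (E3 2) =
        fderiv ℝ g1 (h (Q x), R x) (0, 1) := by
      rw [ContinuousLinearMap.comp_apply,
        show (((fderiv ℝ h (Q x)).comp Q).prod R) (E3 2) = ((0:ℝ), (1:ℝ)) by
          simp [ContinuousLinearMap.prod_apply, hQ2, hR2,
            show ((0:ℝ), (0:ℝ)) = (0 : ℝ × ℝ) from rfl]]
    simp only [ContinuousLinearMap.add_apply, ContinuousLinearMap.smul_apply, e1, e2,
      smul_eq_mul, mul_zero, add_zero]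
    rfl
  have base : ∀ (e : Fin 3 → ℝ) (w : ℝ × ℝ), Q e = w → R e = 0 →
      fderiv ℝ F x e = fderiv ℝ h (Q x) w * g1 (h (Q x), R x) := by
    intro e w hQe hRe
    rw [hFG.fderiv_eq, hGe e w hQe hRe x]
  have m0 := main (E3 0) (1, 0) hQ0 hR0
  have m1 := main (E3 1) (0, 1) hQ1 hR1
  have b0 := base (E3 0) (1, 0) hQ0 hR0
  have b1 := base (E3 1) (0, 1) hQ1 hR1
  show fderiv ℝ (fun y => fderiv ℝ F y (E3 0)) x (E3 2) * fderiv ℝ F x (E3 1) =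
    fderiv ℝ (fun y => fderiv ℝ F y (E3 1)) x (E3 2) * fderiv ℝ F x (E3 0)
  rw [m0, m1, b0, b1]; ring

lemma rev_decomp
    (I : Fin 3 → Set ℝ) (hIopen : ∀ i, IsOpen (I i)) (hIconn : ∀ i, (I i).OrdConnected)
    (U : Set (Fin 3 → ℝ)) (hU : U = {x | ∀ i, x i ∈ I i}) (hUopen : IsOpen U)
    (F : (Fin 3 → ℝ) → ℝ) (hFsm : ContDiffOn ℝ 2 F U)
    (h2 : ∀ x ∈ U, fderiv ℝ F x (E3 1) ≠ 0)
    (hpde : ∀ x ∈ U,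
      fderiv ℝ (fun y => fderiv ℝ F y (E3 0)) x (E3 2) * fderiv ℝ F x (E3 1) =
        fderiv ℝ (fun y => fderiv ℝ F y (E3 1)) x (E3 2) * fderiv ℝ F x (E3 0))
    (a : Fin 3 → ℝ) (ha : a ∈ U) :
    ∃ V : Set (Fin 3 → ℝ), IsOpen V ∧ a ∈ V ∧ V ⊆ U ∧
      ∃ h g : ℝ × ℝ → ℝ, ContDiff ℝ 2 h ∧ ContDiff ℝ 2 g ∧
        ∀ y ∈ V, F y = g (h (y 0, y 1), y 2) := by
  classical
  have hFat : ∀ z ∈ U, ContDiffAt ℝ 2 F z := fun z hz => hFsm.contDiffAt (hUopen.mem_nhds hz)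
  have hFdiff : ∀ z ∈ U, DifferentiableAt ℝ F z := fun z hz =>
    (hFat z hz).differentiableAt (by norm_num)
  have ha2 : a 2 ∈ I 2 := by rw [hU] at ha; exact ha 2
  -- the slice map m
  set m : ℝ × ℝ → (Fin 3 → ℝ) := fun p => v3 p.1 p.2 (a 2) with hmdef
  set M : (ℝ × ℝ) →L[ℝ] (Fin 3 → ℝ) :=
    (ContinuousLinearMap.fst ℝ ℝ ℝ).smulRight (E3 0) +
      (ContinuousLinearMap.snd ℝ ℝ ℝ).smulRight (E3 1) with hMdef
  have hmC : ContDiff ℝ 2 m := by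
    have hme : m = fun p : ℝ × ℝ => p.1 • E3 0 + p.2 • E3 1 + (a 2) • E3 2 := by
      funext p; rw [hmdef]; exact v3_eq _ _ _
    rw [hme]
    exact ((contDiff_fst.smul contDiff_const).add (contDiff_snd.smul contDiff_const)).add
      contDiff_const
  have hmder : ∀ p : ℝ × ℝ, HasFDerivAt m M p := by
    intro p
    have h0 := hasFDerivAt_v3 (f := fun q : ℝ × ℝ => q.1) (g := fun q : ℝ × ℝ => q.2)
      (k := fun _ : ℝ × ℝ => a 2) (hasFDerivAt_fst) (hasFDerivAt_snd)
      (hasFDerivAt_const (a 2) p)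
    have hz : ((0 : (ℝ × ℝ) →L[ℝ] ℝ)).smulRight (E3 2) = 0 := by
      apply ContinuousLinearMap.ext
      intro v
      simp
    rw [hz, add_zero] at h0
    exact h0
  have hMapp : ∀ v : ℝ × ℝ, M v = v3 v.1 v.2 0 := by
    intro v; rw [hMdef, v3_eq]; simp
  set h₀ : ℝ × ℝ → ℝ := fun p => F (m p) with hh₀def
  set ahat : ℝ × ℝ := (a 0, a 1) with hahatdef
  have hma : m ahat = a := by
    rw [hmdef]; exact v3_self a
  have hmaU : m ahat ∈ U := by rw [hma]; exact ha
  have hh₀at : ∀ p : ℝ × ℝ, m p ∈ U → ContDiffAt ℝ 2 h₀ p := fun p hp =>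
    (hFat _ hp).comp p hmC.contDiffAt
  have hh₀der : ∀ p : ℝ × ℝ, m p ∈ U →
      HasFDerivAt h₀ ((fderiv ℝ F (m p)).comp M) p := fun p hp =>
    ((hFdiff _ hp).hasFDerivAt).comp p (hmder p)
  -- the 2D local diffeomorphism
  set Φ : ℝ × ℝ → ℝ × ℝ := fun p => (p.1, h₀ p) with hΦdef
  have hΦat : ContDiffAt ℝ 2 Φ ahat := (contDiff_fst.contDiffAt).prodMk (hh₀at ahat hmaU)
  set A : (ℝ × ℝ) →L[ℝ] (ℝ × ℝ) :=
    (ContinuousLinearMap.fst ℝ ℝ ℝ).prod ((fderiv ℝ F a).comp M) with hAdef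
  have hAder : HasFDerivAt Φ A ahat := by
    refine hasFDerivAt_fst.prodMk ?_
    have := hh₀der ahat hmaU
    rwa [hma] at this
  set p1 : ℝ := fderiv ℝ F a (E3 0) with hp1def
  set q1 : ℝ := fderiv ℝ F a (E3 1) with hq1def
  have hq1ne : q1 ≠ 0 := h2 a ha
  have hAapp : ∀ v : ℝ × ℝ, A v = (v.1, v.1 * p1 + v.2 * q1) := by
    intro v
    rw [hAdef]
    simp only [ContinuousLinearMap.prod_apply, ContinuousLinearMap.coe_fst',
      ContinuousLinearMap.comp_apply]
    rw [hMapp, clm_v3]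
    simp [hp1def, hq1def]
  set B : (ℝ × ℝ) →L[ℝ] (ℝ × ℝ) :=
    (ContinuousLinearMap.fst ℝ ℝ ℝ).prod
      (q1⁻¹ • (ContinuousLinearMap.snd ℝ ℝ ℝ - p1 • ContinuousLinearMap.fst ℝ ℝ ℝ)) with hBdef
  have hBapp : ∀ v : ℝ × ℝ, B v = (v.1, q1⁻¹ * (v.2 - p1 * v.1)) := by
    intro v
    rw [hBdef]
    simp [ContinuousLinearMap.prod_apply, ContinuousLinearMap.smul_apply,
      ContinuousLinearMap.sub_apply]
  have hBA : Function.LeftInverse B A := by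
    intro v
    rw [hAapp, hBapp]
    ext
    · rfl
    · show q1⁻¹ * (v.1 * p1 + v.2 * q1 - p1 * v.1) = v.2
      field_simp
      ring
  have hAB : Function.RightInverse B A := by
    intro v
    rw [hBapp, hAapp]
    ext
    · rfl
    · show v.1 * p1 + q1⁻¹ * (v.2 - p1 * v.1) * q1 = v.2
      field_simp
      ring
  set Aeq : (ℝ × ℝ) ≃L[ℝ] (ℝ × ℝ) := ContinuousLinearEquiv.equivOfInverse A B hBA hAB
    with hAeqdef
  have hAeqcoe : (Aeq : (ℝ × ℝ) →L[ℝ] (ℝ × ℝ)) = A := rfl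
  have hAder' : HasFDerivAt Φ ((Aeq : (ℝ × ℝ) →L[ℝ] (ℝ × ℝ))) ahat := hAder
  set PH := hΦat.toOpenPartialHomeomorph Φ hAder' (by norm_num) with hPHdef
  have hPHcoe : (PH : ℝ × ℝ → ℝ × ℝ) = Φ := rfl
  set b : ℝ × ℝ := Φ ahat with hbdef
  have hsrc : ahat ∈ PH.source :=
    hΦat.mem_toOpenPartialHomeomorph_source hAder' (by norm_num)
  have htgt : b ∈ PH.target :=
    hΦat.image_mem_toOpenPartialHomeomorph_target hAder' (by norm_num)
  have hΨb : PH.symm b = ahat := PH.left_inv hsrc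
  have hΨC : ContDiffAt ℝ 2 (⇑PH.symm) b := by
    apply PH.contDiffAt_symm htgt (f₀' := Aeq)
    · rw [hΨb]; exact hAder
    · rw [hΨb]; exact hΦat
  obtain ⟨u₀, hu₀nhds, hΨon⟩ := hΨC.contDiffOn le_rfl (by simp)
  obtain ⟨s₀, hs₀sub, hs₀open, hbs₀⟩ := mem_nhds_iff.1 hu₀nhds
  have hΨat : ∀ z ∈ s₀, ContDiffAt ℝ 2 (⇑PH.symm) z := fun z hz =>
    (hΨon.mono hs₀sub).contDiffAt (hs₀open.mem_nhds hz)
  have hΨcont : ContinuousOn (⇑PH.symm) s₀ := fun z hz =>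
    ((hΨat z hz).continuousAt).continuousWithinAt
  set Θ : (ℝ × ℝ) × ℝ → (Fin 3 → ℝ) :=
    fun zw => v3 (PH.symm zw.1).1 (PH.symm zw.1).2 zw.2 with hΘdef
  set G : (ℝ × ℝ) × ℝ → ℝ := fun zw => F (Θ zw) with hGdef
  set s₁ : Set (ℝ × ℝ) := PH.target ∩ (s₀ ∩ (⇑PH.symm) ⁻¹' (PH.source ∩ m ⁻¹' U)) with hs₁def
  have hs₁open : IsOpen s₁ :=
    PH.open_target.inter (hΨcont.isOpen_inter_preimage hs₀open
      (PH.open_source.inter (hUopen.preimage hmC.continuous)))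
  have hΘcont : ContinuousOn Θ (s₁ ×ˢ (Set.univ : Set ℝ)) := by
    have hΨ1 : ContinuousOn (fun zw : (ℝ × ℝ) × ℝ => PH.symm zw.1)
        (s₁ ×ˢ (Set.univ : Set ℝ)) :=
      hΨcont.comp continuous_fst.continuousOn (fun zw hzw => hzw.1.2.1)
    have hθ : Θ = fun zw : (ℝ × ℝ) × ℝ =>
        (PH.symm zw.1).1 • E3 0 + (PH.symm zw.1).2 • E3 1 + zw.2 • E3 2 := by
      funext zw; rw [hΘdef]; exact v3_eq _ _ _
    rw [hθ]
    exact (((continuous_fst.comp_continuousOn hΨ1).smul continuousOn_const).add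
      ((continuous_snd.comp_continuousOn hΨ1).smul continuousOn_const)).add
      (continuous_snd.continuousOn.smul continuousOn_const)
  set Ω : Set ((ℝ × ℝ) × ℝ) := (s₁ ×ˢ (Set.univ : Set ℝ)) ∩ Θ ⁻¹' U with hΩdef
  have hΩopen : IsOpen Ω :=
    hΘcont.isOpen_inter_preimage (hs₁open.prod isOpen_univ) hUopen
  have hbs₁ : b ∈ s₁ := by
    refine ⟨htgt, hbs₀, ?_⟩
    rw [Set.mem_preimage, hΨb]
    exact ⟨hsrc, hmaU⟩
  have hΘb : Θ (b, a 2) = a := by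
    show v3 (PH.symm b).1 (PH.symm b).2 (a 2) = a
    rw [hΨb]
    exact v3_self a
  have hbase : ((b, a 2) : (ℝ × ℝ) × ℝ) ∈ Ω := by
    refine ⟨⟨hbs₁, Set.mem_univ _⟩, ?_⟩
    rw [Set.mem_preimage, hΘb]; exact ha
  obtain ⟨ε, hε, hball⟩ := Metric.isOpen_iff.1 hΩopen _ hbase
  -- the first partial derivative of G vanishes on Ω
  have hG1zero : ∀ zw ∈ Ω, ∃ D : ((ℝ × ℝ) × ℝ) →L[ℝ] ℝ,
      HasFDerivAt G D zw ∧ D ((1, 0), 0) = 0 := by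
    intro zw hzw
    obtain ⟨⟨hz₁, -⟩, hYU⟩ := hzw
    obtain ⟨hzt, hzs₀, hzpre⟩ := hz₁
    rw [Set.mem_preimage] at hzpre
    obtain ⟨hzsrc, hmU⟩ := hzpre
    rw [Set.mem_preimage] at hYU
    set xq : ℝ × ℝ := PH.symm zw.1 with hxqdef
    have hΨdiff : DifferentiableAt ℝ (⇑PH.symm) zw.1 :=
      (hΨat _ hzs₀).differentiableAt (by norm_num)
    set S := fderiv ℝ (⇑PH.symm) zw.1 with hSdef
    have hSder : HasFDerivAt (⇑PH.symm) S zw.1 := hΨdiff.hasFDerivAt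
    have hstep : HasFDerivAt (fun zw : (ℝ × ℝ) × ℝ => PH.symm zw.1)
        (S.comp (ContinuousLinearMap.fst ℝ (ℝ × ℝ) ℝ)) zw :=
      hSder.comp zw hasFDerivAt_fst
    have c1 : HasFDerivAt (fun zw : (ℝ × ℝ) × ℝ => (PH.symm zw.1).1)
        ((ContinuousLinearMap.fst ℝ ℝ ℝ).comp
          (S.comp (ContinuousLinearMap.fst ℝ (ℝ × ℝ) ℝ))) zw :=
      (ContinuousLinearMap.fst ℝ ℝ ℝ).hasFDerivAt.comp zw hstep
    have c2 : HasFDerivAt (fun zw : (ℝ × ℝ) × ℝ => (PH.symm zw.1).2)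
        ((ContinuousLinearMap.snd ℝ ℝ ℝ).comp
          (S.comp (ContinuousLinearMap.fst ℝ (ℝ × ℝ) ℝ))) zw :=
      (ContinuousLinearMap.snd ℝ ℝ ℝ).hasFDerivAt.comp zw hstep
    have c3 : HasFDerivAt (fun zw : (ℝ × ℝ) × ℝ => zw.2)
        (ContinuousLinearMap.snd ℝ (ℝ × ℝ) ℝ) zw := hasFDerivAt_snd
    have hΘder := hasFDerivAt_v3 c1 c2 c3
    have hGder : HasFDerivAt G ((fderiv ℝ F (Θ zw)).comp
        (((ContinuousLinearMap.fst ℝ ℝ ℝ).comp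
            (S.comp (ContinuousLinearMap.fst ℝ (ℝ × ℝ) ℝ))).smulRight (E3 0) +
          ((ContinuousLinearMap.snd ℝ ℝ ℝ).comp
            (S.comp (ContinuousLinearMap.fst ℝ (ℝ × ℝ) ℝ))).smulRight (E3 1) +
          (ContinuousLinearMap.snd ℝ (ℝ × ℝ) ℝ).smulRight (E3 2))) zw :=
      ((hFdiff _ hYU).hasFDerivAt).comp zw hΘder
    refine ⟨_, hGder, ?_⟩
    set v : ℝ × ℝ := S (1, 0) with hvdef
    have hDΘ : (((ContinuousLinearMap.fst ℝ ℝ ℝ).comp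
            (S.comp (ContinuousLinearMap.fst ℝ (ℝ × ℝ) ℝ))).smulRight (E3 0) +
          ((ContinuousLinearMap.snd ℝ ℝ ℝ).comp
            (S.comp (ContinuousLinearMap.fst ℝ (ℝ × ℝ) ℝ))).smulRight (E3 1) +
          (ContinuousLinearMap.snd ℝ (ℝ × ℝ) ℝ).smulRight (E3 2))
          (((1 : ℝ), (0 : ℝ)), (0 : ℝ)) = v3 v.1 v.2 0 := by
      rw [v3_eq]
      simp [ContinuousLinearMap.smulRight_apply, hvdef]
    -- identify S (1,0) via the inverse function identity
    have hA_xq : HasFDerivAt Φ ((ContinuousLinearMap.fst ℝ ℝ ℝ).prod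
        ((fderiv ℝ F (m xq)).comp M)) xq := hasFDerivAt_fst.prodMk (hh₀der xq hmU)
    have hcompder : HasFDerivAt (Φ ∘ ⇑PH.symm)
        (((ContinuousLinearMap.fst ℝ ℝ ℝ).prod
          ((fderiv ℝ F (m xq)).comp M)).comp S) zw.1 := hA_xq.comp zw.1 hSder
    have hid : HasFDerivAt (Φ ∘ ⇑PH.symm) (ContinuousLinearMap.id ℝ (ℝ × ℝ)) zw.1 := by
      apply (hasFDerivAt_id zw.1).congr_of_eventuallyEq
      filter_upwards [PH.open_target.mem_nhds hzt] with z' hz'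
      have hri := PH.right_inv hz'
      rw [hPHcoe] at hri
      simpa using hri
    have huniq : (((ContinuousLinearMap.fst ℝ ℝ ℝ).prod
        ((fderiv ℝ F (m xq)).comp M)).comp S) = ContinuousLinearMap.id ℝ (ℝ × ℝ) :=
      hcompder.unique hid
    have happ : (((ContinuousLinearMap.fst ℝ ℝ ℝ).prod
        ((fderiv ℝ F (m xq)).comp M)).comp S) ((1 : ℝ), (0 : ℝ)) = ((1 : ℝ), (0 : ℝ)) := by
      rw [huniq]; rfl
    rw [ContinuousLinearMap.comp_apply, ← hvdef, ContinuousLinearMap.prod_apply,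
      Prod.mk.injEq] at happ
    obtain ⟨hv1, hv2⟩ := happ
    have hv1' : v.1 = 1 := hv1
    have hMv : fderiv ℝ F (m xq) (M v) =
        v.1 * fderiv ℝ F (m xq) (E3 0) + v.2 * fderiv ℝ F (m xq) (E3 1) := by
      rw [hMapp, clm_v3]; ring
    have hv2' : v.1 * fderiv ℝ F (m xq) (E3 0) + v.2 * fderiv ℝ F (m xq) (E3 1) = 0 := by
      rw [← hMv]; exact hv2
    -- relation between Θ zw and m xq through the PDE
    have hupd : Function.update (Θ zw) 2 (a 2) = m xq := by
      funext i
      fin_cases i <;> simp [Function.update_apply, hΘdef, hmdef, v3, hxqdef]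
    have hkey := ratio_const I hIopen hIconn U hU hUopen F hFsm h2 hpde
      (Θ zw) hYU (a 2) ha2
    rw [hupd] at hkey
    -- conclude
    rw [ContinuousLinearMap.comp_apply, hDΘ, clm_v3]
    have hF2m : fderiv ℝ F (m xq) (E3 1) ≠ 0 := h2 _ hmU
    have hz0 : (v.1 * fderiv ℝ F (Θ zw) (E3 0) + v.2 * fderiv ℝ F (Θ zw) (E3 1) +
        0 * fderiv ℝ F (Θ zw) (E3 2)) * fderiv ℝ F (m xq) (E3 1) = 0 := by
      linear_combination v.1 * hkey + fderiv ℝ F (Θ zw) (E3 1) * hv2'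
    have := mul_eq_zero.1 hz0
    tauto
  -- constancy of G in the first variable on the ε-ball
  have hconstε : ∀ zw ∈ Metric.ball ((b, a 2) : (ℝ × ℝ) × ℝ) ε,
      G zw = G ((b.1, zw.1.2), zw.2) := by
    intro zw hzw
    have hmem : ∀ t ∈ Metric.ball b.1 ε,
        (((t, zw.1.2), zw.2) : (ℝ × ℝ) × ℝ) ∈ Metric.ball ((b, a 2) : (ℝ × ℝ) × ℝ) ε := by
      intro t ht
      rw [Metric.mem_ball, Prod.dist_eq, Prod.dist_eq, max_lt_iff, max_lt_iff] at hzw ⊢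
      rw [Metric.mem_ball] at ht
      exact ⟨⟨ht, hzw.1.2⟩, hzw.2⟩
    set φ : ℝ → ℝ := fun t => G ((t, zw.1.2), zw.2) with hφdef
    have hφder : ∀ t ∈ Metric.ball b.1 ε, HasDerivAt φ 0 t := by
      intro t ht
      obtain ⟨D, hD, hD0⟩ := hG1zero _ (hball (hmem t ht))
      have hι : HasDerivAt (fun t : ℝ => (((t, zw.1.2), zw.2) : (ℝ × ℝ) × ℝ))
          ((((1 : ℝ), (0 : ℝ)), (0 : ℝ)) : (ℝ × ℝ) × ℝ) t :=
        ((hasDerivAt_id t).prodMk (hasDerivAt_const t _)).prodMk (hasDerivAt_const t _)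
      have hcomp := hD.comp_hasDerivAt t hι
      rw [hD0] at hcomp
      exact hcomp
    have hconv : Convex ℝ (Metric.ball b.1 ε) := convex_ball _ _
    have hdOn : DifferentiableOn ℝ φ (Metric.ball b.1 ε) := fun t ht =>
      ((hφder t ht).differentiableAt).differentiableWithinAt
    have hzeroOn : ∀ t ∈ Metric.ball b.1 ε, fderivWithin ℝ φ (Metric.ball b.1 ε) t = 0 := by
      intro t ht
      rw [fderivWithin_of_isOpen Metric.isOpen_ball ht, (hφder t ht).hasFDerivAt.fderiv]
      apply ContinuousLinearMap.ext
      intro u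
      simp
    have hz1 : zw.1.1 ∈ Metric.ball b.1 ε := by
      rw [Metric.mem_ball, Prod.dist_eq, Prod.dist_eq, max_lt_iff, max_lt_iff] at hzw
      rw [Metric.mem_ball]
      exact hzw.1.1
    exact hconv.is_const_of_fderivWithin_eq_zero hdOn hzeroOn hz1 (Metric.mem_ball_self hε)
  -- the local factor g₀ and its smoothness
  set g₀ : ℝ × ℝ → ℝ := fun uv => G ((b.1, uv.1), uv.2) with hg₀def
  have hΨfst : ContDiffAt ℝ 2 (fun zw : (ℝ × ℝ) × ℝ => PH.symm zw.1) (b, a 2) :=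
    ContDiffAt.comp (b, a 2) hΨC contDiffAt_fst
  have hΘatb : ContDiffAt ℝ 2 Θ (b, a 2) := by
    have hθ : Θ = fun zw : (ℝ × ℝ) × ℝ =>
        (PH.symm zw.1).1 • E3 0 + (PH.symm zw.1).2 • E3 1 + zw.2 • E3 2 := by
      funext zw; exact v3_eq _ _ _
    rw [hθ]
    exact (((contDiffAt_fst.comp (b, a 2) hΨfst).smul contDiffAt_const).add
      ((contDiffAt_snd.comp (b, a 2) hΨfst).smul contDiffAt_const)).add
      (contDiffAt_snd.smul contDiffAt_const)
  have hGatb : ContDiffAt ℝ 2 G (b, a 2) := by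
    have hFa : ContDiffAt ℝ 2 F (Θ (b, a 2)) := by rw [hΘb]; exact hFat a ha
    exact hFa.comp (b, a 2) hΘatb
  have hg₀at : ContDiffAt ℝ 2 g₀ ((b.2, a 2) : ℝ × ℝ) := by
    have hj : ContDiffAt ℝ 2
        (fun uv : ℝ × ℝ => (((b.1, uv.1), uv.2) : (ℝ × ℝ) × ℝ)) (b.2, a 2) :=
      (contDiffAt_const.prodMk contDiffAt_fst).prodMk contDiffAt_snd
    have hGatb' : ContDiffAt ℝ 2 G (((b.1, ((b.2, a 2) : ℝ × ℝ).1),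
        ((b.2, a 2) : ℝ × ℝ).2) : (ℝ × ℝ) × ℝ) := hGatb
    exact ContDiffAt.comp (g := G)
      (f := fun uv : ℝ × ℝ => (((b.1, uv.1), uv.2) : (ℝ × ℝ) × ℝ)) (b.2, a 2) hGatb' hj
  have hh₀ahat : ContDiffAt ℝ 2 h₀ ahat := hh₀at ahat hmaU
  obtain ⟨h, hhC, hhagree⟩ := extend2 hh₀ahat
  obtain ⟨g, hgC, hgagree⟩ := extend2 hg₀at
  obtain ⟨Wh, hWhprop, hWhopen, hWhmem⟩ := eventually_nhds_iff.1 hhagree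
  obtain ⟨Wg, hWgprop, hWgopen, hWgmem⟩ := eventually_nhds_iff.1 hgagree
  -- assemble the neighborhood V
  set pr : (Fin 3 → ℝ) → ℝ × ℝ := fun y => (y 0, y 1) with hprdef
  have hprcont : Continuous pr := (continuous_apply 0).prodMk (continuous_apply 1)
  set O : Set (Fin 3 → ℝ) := pr ⁻¹' (m ⁻¹' U) with hOdef
  have hOopen : IsOpen O := ((hUopen.preimage hmC.continuous)).preimage hprcont
  set κ : (Fin 3 → ℝ) → (ℝ × ℝ) × ℝ := fun y => ((y 0, h₀ (pr y)), y 2) with hκdef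
  have hκcont : ContinuousOn κ O := by
    have hh₀cont : ContinuousOn h₀ (m ⁻¹' U) :=
      hFsm.continuousOn.comp hmC.continuous.continuousOn (fun p hp => hp)
    exact ((continuous_apply 0).continuousOn.prodMk
      (hh₀cont.comp hprcont.continuousOn (fun y hy => hy))).prodMk
      (continuous_apply 2).continuousOn
  set Ξ : Set ((ℝ × ℝ) × ℝ) := Metric.ball ((b, a 2) : (ℝ × ℝ) × ℝ) ε ∩
    {zw | (zw.1.2, zw.2) ∈ Wg} with hΞdef
  have hΞopen : IsOpen Ξ := Metric.isOpen_ball.inter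
    (hWgopen.preimage ((continuous_snd.comp continuous_fst).prodMk continuous_snd))
  refine ⟨(U ∩ pr ⁻¹' (PH.source ∩ Wh)) ∩ (O ∩ κ ⁻¹' Ξ), ?_, ?_, ?_, h, g, hhC, hgC, ?_⟩
  · exact (hUopen.inter ((PH.open_source.inter hWhopen).preimage hprcont)).inter
      (hκcont.isOpen_inter_preimage hOopen hΞopen)
  · have hpra : pr a = ahat := rfl
    have haO : a ∈ O := by
      rw [hOdef, Set.mem_preimage, Set.mem_preimage, hpra]
      exact hmaU
    have hκa : κ a = ((b, a 2) : (ℝ × ℝ) × ℝ) := rfl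
    refine ⟨⟨ha, ?_⟩, haO, ?_⟩
    · rw [Set.mem_preimage, hpra]; exact ⟨hsrc, hWhmem⟩
    · rw [Set.mem_preimage, hκa]
      exact ⟨Metric.mem_ball_self hε, hWgmem⟩
  · intro y hy; exact hy.1.1
  · intro y hy
    obtain ⟨⟨hyU, hyWhsrc⟩, hyO, hyκ⟩ := hy
    rw [Set.mem_preimage] at hyWhsrc
    obtain ⟨hysrc, hyWh⟩ := hyWhsrc
    rw [Set.mem_preimage] at hyκ
    obtain ⟨hyball, hyWg⟩ := hyκ
    have hΦpr : Φ (pr y) = ((y 0 : ℝ), h₀ (pr y)) := rfl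
    have hinv : PH.symm (((y 0 : ℝ), h₀ (pr y)) : ℝ × ℝ) = pr y := by
      rw [← hΦpr, ← hPHcoe]
      exact PH.left_inv hysrc
    have hstepA : F y = G (κ y) := by
      have hΘκ : Θ (κ y) = y := by
        show v3 (PH.symm (((y 0 : ℝ), h₀ (pr y)) : ℝ × ℝ)).1
          (PH.symm (((y 0 : ℝ), h₀ (pr y)) : ℝ × ℝ)).2 (y 2) = y
        rw [hinv]
        exact v3_self y
      show F y = F (Θ (κ y))
      rw [hΘκ]
    have hstepC : G (κ y) = g₀ (h₀ (pr y), y 2) := hconstε (κ y) hyball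
    have e1 : h ((y 0 : ℝ), (y 1 : ℝ)) = h₀ (pr y) := hWhprop _ hyWh
    have e2 : g (h₀ (pr y), y 2) = g₀ (h₀ (pr y), y 2) := hWgprop _ hyWg
    rw [hstepA, hstepC, e1, e2]


end Stmt7Aux

/-- Goldberg/Goursat: A C² function `F` on a product
`U = I₁ × I₂ × I₃` of open intervals with `∂F/∂x₁ ≠ 0` and `∂F/∂x₂ ≠ 0` on `U`
admits, locally around every point of `U`, a decomposition
`F(x₁,x₂,x₃) = g(h(x₁,x₂), x₃)` with C² functions `g, h` of two variables each,
iff `F` satisfies on `U` the PDE `F₃₁·F₂ = F₃₂·F₁`. -/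
theorem stmt_7
    (I : Fin 3 → Set ℝ) (hIopen : ∀ i, IsOpen (I i))
    (hIne : ∀ i, (I i).Nonempty) (hIconn : ∀ i, (I i).OrdConnected)
    (U : Set (Fin 3 → ℝ)) (hU : U = {x | ∀ i, x i ∈ I i})
    (F : (Fin 3 → ℝ) → ℝ) (hFsm : ContDiffOn ℝ 2 F U)
    (h1 : ∀ x ∈ U, fderiv ℝ F x (Pi.single 0 1) ≠ 0)
    (h2 : ∀ x ∈ U, fderiv ℝ F x (Pi.single 1 1) ≠ 0) :
    (∀ x ∈ U, ∃ V : Set (Fin 3 → ℝ), IsOpen V ∧ x ∈ V ∧ V ⊆ U ∧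
        ∃ h g : ℝ × ℝ → ℝ, ContDiff ℝ 2 h ∧ ContDiff ℝ 2 g ∧
          ∀ y ∈ V, F y = g (h (y 0, y 1), y 2)) ↔
      (∀ x ∈ U,
        fderiv ℝ (fun y => fderiv ℝ F y (Pi.single 0 1)) x (Pi.single 2 1) *
            fderiv ℝ F x (Pi.single 1 1) =
          fderiv ℝ (fun y => fderiv ℝ F y (Pi.single 1 1)) x (Pi.single 2 1) *
            fderiv ℝ F x (Pi.single 0 1)) := by
  have hUopen : IsOpen U := by
    rw [hU]
    have hpi : {x : Fin 3 → ℝ | ∀ i, x i ∈ I i} = Set.pi Set.univ I := by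
      ext x; simp [Set.mem_pi]
    rw [hpi]
    exact isOpen_set_pi Set.finite_univ (fun i _ => hIopen i)
  constructor
  · intro hdec x hx
    obtain ⟨V, hVopen, hxV, hVU, h, g, hh, hg, heq⟩ := hdec x hx
    exact Stmt7Aux.fwd_pde hVopen hxV hh hg heq
  · intro hpde x hx
    exact Stmt7Aux.rev_decomp I hIopen hIconn U hU hUopen F hFsm
      (fun z hz => h2 z hz) (fun z hz => hpde z hz) x hx
end
end
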